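/- Let η be a symmetric nondegenerate N×N complex matrix and K = η∂_x. Let h̄_{β,q} ∈ Λ̂_N^{[0]} (1 ≤ β ≤ N, q ≥ 0) be pairwise commuting local functionals, {h̄_{β,q}, h̄_{γ,p}}_K = 0, such that h̄_{1,0} generates the spatial translations, K^{αμ} δh̄_{1,0}/δu^μ = u^α_x. Suppose that ∂h̄_{β,q}/∂u^1 = h̄_{β,q−1} for all q ≥ 1 and ∂h̄_{β,0}/∂u^1 = ∫ θ_{βμ} u^μ dx for some nondegenerate complex matrix θ = (θ_{βμ}). Then the differential polynomials h_{β,q} := δh̄_{β,q+1}/δu^1, q ≥ −1, define a tau-structure for this hierarchy: the h̄_{β,−1} := ∫ h_{β,−1} dx = ∫ θ_{βμ}u^μ dx are N linearly independent Casimirs of K, ∫ h_{β,q} dx = h̄_{β,q} for q ≥ 0, and the tau-symmetry {h_{α,p−1}, h̄_{β,q}}_K = {h_{β,q−1}, h̄_{α,p}}_K holds for all 1 ≤ α,β ≤ N and p,q ≥ 0. -/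

import Mathlib

/-!
Common formal framework for the theory of differential polynomials, local
functionals and tau-structures, following Buryak–Dubrovin–Guéré–Rossi.

Variables of the algebra of differential polynomials: `Sum.inl (α, i)` stands
for `u^α_i` (with `u^α = u^α_0`) and `Sum.inr ()` stands for `ε`.  The paper's
index `1` (the unit direction) corresponds to `(0 : Fin N)` here.
-/

/-- The variables of the algebra of differential polynomials. -/
abbrev DVar (N : ℕ) : Type := (Fin N × ℕ) ⊕ Unit

/-- The ring `Â_N` of (extended) differential polynomials, realized inside the
ring of formal power series in the variables `u^α_i` and `ε`. -/
abbrev DP (N : ℕ) : Type := MvPowerSeries (DVar N) ℂ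

namespace DP

variable {N : ℕ}

/-- Coefficient of a monomial. -/
noncomputable def co (f : DP N) (m : DVar N →₀ ℕ) : ℂ :=
  MvPowerSeries.coeff m f

/-- Build a power series from its coefficients. -/
def ofCo (F : (DVar N →₀ ℕ) → ℂ) : DP N := F

/-- The variable `u^α_i`. -/
noncomputable def uv (α : Fin N) (i : ℕ) : DP N :=
  MvPowerSeries.X (Sum.inl (α, i))

/-- The variable `ε`. -/
noncomputable def eps : DP N := MvPowerSeries.X (Sum.inr ())

/-- The partial derivative `∂/∂v` with respect to one of the variables. -/
noncomputable def pd (v : DVar N) (f : DP N) : DP N :=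
  ofCo fun m => ((m v : ℂ) + 1) * co f (m + Finsupp.single v 1)

/-- The spatial derivative `∂_x = Σ_{α,i} u^α_{i+1} ∂/∂u^α_i`. -/
noncomputable def dx (f : DP N) : DP N :=
  ofCo fun m =>
    ∑ v ∈ m.support,
      (match v with
        | Sum.inl (α, i + 1) =>
            co (pd (Sum.inl (α, i)) f) (m - Finsupp.single (Sum.inl (α, i + 1)) 1)
        | _ => (0 : ℂ))

/-- The variational derivative `δ/δu^μ = Σ_{i≥0} (−∂_x)^i ∘ ∂/∂u^μ_i`. -/
noncomputable def vd (μ : Fin N) (f : DP N) : DP N :=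
  ofCo fun m => ∑ᶠ i : ℕ, ((-1 : ℂ) ^ i) * co (dx^[i] (pd (Sum.inl (μ, i)) f)) m

/-- The weighted degree of a monomial: `deg u^α_i = i`, `deg ε = −1`. -/
noncomputable def wdeg (m : DVar N →₀ ℕ) : ℤ :=
  ∑ v ∈ m.support,
    (match v with
      | Sum.inl (_, i) => (i : ℤ)
      | Sum.inr _ => (-1 : ℤ)) * (m v : ℤ)

/-- Degree-`k` homogeneity (membership in `Â_N^{[k]}`). -/
def IsHomog (k : ℤ) (f : DP N) : Prop :=
  ∀ m, co f m ≠ 0 → wdeg m = k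

/-- Being a constant, i.e. an element of `ℂ[[ε]]`. -/
def IsConst (f : DP N) : Prop :=
  ∀ m, co f m ≠ 0 → ∀ v ∈ m.support, v = Sum.inr ()

/-- Vanishing of the evaluation at `u^*_* = 0`. -/
def VanishAtU0 (f : DP N) : Prop :=
  ∀ k : ℕ, co f (Finsupp.single (Sum.inr ()) k) = 0

/-- Being a genuine differential polynomial: in each ε-degree at most `e`,
polynomiality (bounded degree, boundedly many variables) in the jet
variables `u^α_i`, `i ≥ 1`. -/
def IsDiffPoly (f : DP N) : Prop :=
  ∀ e : ℕ, ∃ D : ℕ, ∀ m, co f m ≠ 0 → m (Sum.inr ()) ≤ e →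
    ((∑ v ∈ m.support,
        (match v with
          | Sum.inl (_, _ + 1) => m v
          | _ => 0)) ≤ D) ∧
      ∀ (α : Fin N) (i : ℕ), D < i → m (Sum.inl (α, i)) = 0

/-- The submodule of constants `ℂ[[ε]] ⊆ Â_N`. -/
noncomputable def constSub (N : ℕ) : Submodule ℂ (DP N) where
  carrier := {f | IsConst f}
  add_mem' := by
    intro f g hf hg m hm
    have hco : co (f + g) m = co f m + co g m := map_add _ _ _
    by_cases h1 : co f m = 0
    · have h2 : co g m ≠ 0 := by
        intro h2; exact hm (by rw [hco, h1, h2, add_zero])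
      exact hg m h2
    · exact hf m h1
  zero_mem' := by
    intro m hm
    exact (hm (map_zero (MvPowerSeries.coeff (R := ℂ) m))).elim
  smul_mem' := by
    intro c f hf m hm
    have hne : co f m ≠ 0 := by
      intro h
      apply hm
      have hsm : co (c • f) m = c * co f m := by
        simp [co]
      rw [hsm, h, mul_zero]
    exact hf m hne

/-- The submodule `ℂ[[ε]] + ∂_x(Â_N)` by which one quotients to get local
functionals. -/
noncomputable def lfSub (N : ℕ) : Submodule ℂ (DP N) :=
  constSub N ⊔ Submodule.span ℂ (Set.range (dx : DP N → DP N))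

/-- The space `Λ̂_N` of local functionals. -/
abbrev LF (N : ℕ) := DP N ⧸ lfSub N

/-- The projection `f ↦ ∫ f dx`. -/
noncomputable def intg : DP N →ₗ[ℂ] LF N := (lfSub N).mkQ

/-- A choice of density for a local functional. -/
noncomputable def rep (h : LF N) : DP N :=
  (Submodule.Quotient.mk_surjective (lfSub N) h).choose

/-- The variational derivative `δ/δu^μ` of a local functional. -/
noncomputable def vdQ (μ : Fin N) (h : LF N) : DP N := vd μ (rep h)

/-- The partial derivative `∂/∂v` of a local functional. -/
noncomputable def pdQ (v : DVar N) (h : LF N) : LF N := intg (pd v (rep h))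

/-- The degree-`k` local functionals `Λ̂_N^{[k]}`. -/
noncomputable def LFHomog (N : ℕ) (k : ℤ) : Set (LF N) :=
  intg '' {f : DP N | IsHomog k f ∧ IsDiffPoly f}

/-- The operator `K = η ∂_x` applied to a tuple of differential polynomials. -/
noncomputable def etaAp (η : Matrix (Fin N) (Fin N) ℂ) (α : Fin N)
    (g : Fin N → DP N) : DP N :=
  ∑ ν : Fin N, η α ν • dx (g ν)

/-- The bracket `{f̄, ḡ}_{η∂_x}` of local functionals. -/
noncomputable def lfbEta (η : Matrix (Fin N) (Fin N) ℂ) (f g : LF N) : LF N :=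
  intg (∑ μ : Fin N, vdQ μ f * etaAp η μ fun ν => vdQ ν g)

/-- The bracket `{f, h̄}_{η∂_x}` of a differential polynomial with a local
functional. -/
noncomputable def pbEta (η : Matrix (Fin N) (Fin N) ℂ) (f : DP N) (h : LF N) : DP N :=
  ofCo fun m => ∑ γ : Fin N, ∑ᶠ n : ℕ,
    co (pd (Sum.inl (γ, n)) f * dx^[n] (etaAp η γ fun μ => vdQ μ h)) m

/-- A general operator `K^{γν} = Σ_j K^{γν}_j ∂_x^j` applied to a tuple of
differential polynomials. -/
noncomputable def Kap (K : Fin N → Fin N → ℕ → DP N) (γ : Fin N)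
    (g : Fin N → DP N) : DP N :=
  ∑ ν : Fin N, ofCo fun m => ∑ᶠ j : ℕ, co (K γ ν j * dx^[j] (g ν)) m

/-- The bracket `{f̄, ḡ}_K` of local functionals. -/
noncomputable def lfbK (K : Fin N → Fin N → ℕ → DP N) (f g : LF N) : LF N :=
  intg (∑ μ : Fin N, vdQ μ f * Kap K μ fun ν => vdQ ν g)

/-- The bracket `{f, h̄}_K` of a differential polynomial with a local
functional. -/
noncomputable def pbK (K : Fin N → Fin N → ℕ → DP N) (f : DP N) (h : LF N) : DP N :=
  ofCo fun m => ∑ γ : Fin N, ∑ᶠ n : ℕ,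
    co (pd (Sum.inl (γ, n)) f * dx^[n] (Kap K γ fun μ => vdQ μ h)) m

/-- Being a hamiltonian operator. -/
structure IsHamOp (K : Fin N → Fin N → ℕ → DP N) : Prop where
  finite : ∀ γ ν, ∃ J : ℕ, ∀ j, J ≤ j → K γ ν j = 0
  deg : ∀ (γ ν : Fin N) (j : ℕ), IsHomog (1 - (j : ℤ)) (K γ ν j)
  poly : ∀ γ ν j, IsDiffPoly (K γ ν j)
  antisym : ∀ f g : LF N, lfbK K f g = -lfbK K g f
  jacobi : ∀ f g h : LF N,
    lfbK K (lfbK K f g) h + lfbK K (lfbK K g h) f + lfbK K (lfbK K h f) g = 0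

/-- A hamiltonian hierarchy: a hamiltonian operator together with pairwise
commuting Hamiltonians `h̄_{β,q} ∈ Λ̂^{[0]}_N` such that `h̄_{1,0}` generates the
spatial translations. -/
structure IsHierarchy [NeZero N] (K : Fin N → Fin N → ℕ → DP N)
    (H : Fin N → ℕ → LF N) : Prop where
  ham : IsHamOp K
  mem : ∀ β q, H β q ∈ LFHomog N 0
  comm : ∀ β q γ p, lfbK K (H β q) (H γ p) = 0
  transl : ∀ α, Kap K α (fun μ => vdQ μ (H 0 0)) = uv α 1

/-- A tau-structure for a hamiltonian hierarchy.  Here `h β q` denotes the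
tau-symmetric density `h_{β,q-1}` (an index shift by one). -/
structure IsTauStructure [NeZero N] (K : Fin N → Fin N → ℕ → DP N)
    (H : Fin N → ℕ → LF N) (h : Fin N → ℕ → DP N) : Prop where
  mem : ∀ β q, IsHomog 0 (h β q) ∧ IsDiffPoly (h β q)
  casimir : ∀ β α, Kap K α (fun μ => vdQ μ (intg (h β 0))) = 0
  indep : LinearIndependent ℂ fun β : Fin N => intg (h β 0)
  nondeg : Matrix.det (Matrix.of fun α β : Fin N => co (K α β 1) 0) ≠ 0
  dens : ∀ β q, intg (h β (q + 1)) = H β q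
  tausym : ∀ α β p q, pbK K (h α p) (H β q) = pbK K (h β q) (H α p)

end DP

namespace DP
variable {N : ℕ}

-- ## auxiliary development
abbrev Mon (N : ℕ) := DVar N →₀ ℕ

lemma co_ofCo (F : Mon N → ℂ) (m : Mon N) : co (ofCo F) m = F m := by rfl
lemma ext_co {f g : DP N} (h : ∀ m, co f m = co g m) : f = g := by
  ext m; exact h m
@[simp] lemma co_add (f g : DP N) (m : Mon N) : co (f + g) m = co f m + co g m := map_add _ _ _
@[simp] lemma co_smul (c : ℂ) (f : DP N) (m : Mon N) : co (c • f) m = c * co f m := by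
  simp [co]
@[simp] lemma co_zero (m : Mon N) : co (0 : DP N) m = 0 := map_zero _
@[simp] lemma co_neg (f : DP N) (m : Mon N) : co (-f) m = - co f m := map_neg _ _
@[simp] lemma co_sub (f g : DP N) (m : Mon N) : co (f - g) m = co f m - co g m := map_sub _ _ _
lemma co_sum {ι : Type*} (s : Finset ι) (F : ι → DP N) (m : Mon N) :
    co (∑ i ∈ s, F i) m = ∑ i ∈ s, co (F i) m := map_sum _ _ _
lemma co_mul (f g : DP N) (m : Mon N) :
    co (f * g) m = ∑ p ∈ Finset.HasAntidiagonal.antidiagonal m, co f p.1 * co g p.2 :=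
  MvPowerSeries.coeff_mul m f g

lemma co_pd (v : DVar N) (f : DP N) (m : Mon N) :
    co (pd v f) m = ((m v : ℂ) + 1) * co f (m + Finsupp.single v 1) := by rfl

lemma pd_add (v : DVar N) (f g : DP N) : pd v (f + g) = pd v f + pd v g := by
  apply ext_co; intro m; simp [co_pd]; ring
lemma pd_smul (v : DVar N) (c : ℂ) (f : DP N) : pd v (c • f) = c • pd v f := by
  apply ext_co; intro m; simp [co_pd]; ring
@[simp] lemma pd_zero (v : DVar N) : pd v (0 : DP N) = 0 := by
  apply ext_co; intro m; simp [co_pd]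
lemma pd_sum {ι : Type*} (v : DVar N) (s : Finset ι) (F : ι → DP N) :
    pd v (∑ i ∈ s, F i) = ∑ i ∈ s, pd v (F i) := by
  apply ext_co; intro m; simp [co_pd, co_sum, Finset.mul_sum]
lemma pd_sub (v : DVar N) (f g : DP N) : pd v (f - g) = pd v f - pd v g := by
  apply ext_co; intro m; simp [co_pd]; ring

lemma pd_pd (v w : DVar N) (f : DP N) : pd v (pd w f) = pd w (pd v f) := by
  apply ext_co; intro m
  simp only [co_pd, Finsupp.add_apply, Finsupp.single_apply]
  rw [show m + Finsupp.single v 1 + Finsupp.single w 1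
      = m + Finsupp.single w 1 + Finsupp.single v 1 by abel]
  by_cases h : v = w
  · subst h; simp
  · rw [if_neg h, if_neg fun hh => h hh.symm]
    push_cast; ring

/-- index embedding for `u^α_{i+1}`-type variables -/
def ev (p : Fin N × ℕ) : DVar N := Sum.inl (p.1, p.2 + 1)
lemma ev_inj : Function.Injective (ev (N := N)) := by
  intro p q h; simp only [ev, Sum.inl.injEq, Prod.mk.injEq] at h
  exact Prod.ext h.1 (by omega)

/-- the finite index set of pairs relevant for `dx` at a monomial -/
noncomputable def PF (m : Mon N) : Finset (Fin N × ℕ) :=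
  m.support.preimage ev (ev_inj.injOn)

lemma mem_PF {m : Mon N} {p : Fin N × ℕ} : p ∈ PF m ↔ m (ev p) ≠ 0 := by
  simp [PF, Finsupp.mem_support_iff]


/-- single term of `dx` -/
noncomputable def dxP (f : DP N) (m : Mon N) (p : Fin N × ℕ) : ℂ :=
  if m (ev p) = 0 then 0 else co (pd (Sum.inl p) f) (m - Finsupp.single (ev p) 1)

noncomputable def dxF (f : DP N) (m : Mon N) : DVar N → ℂ
  | Sum.inl (α, i + 1) => co (pd (Sum.inl (α, i)) f) (m - Finsupp.single (Sum.inl (α, i + 1)) 1)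
  | _ => 0

lemma co_dx (f : DP N) (m : Mon N) : co (dx f) m = ∑ v ∈ m.support, dxF f m v := by
  have : co (dx f) m = ∑ v ∈ m.support,
      (match v with
        | Sum.inl (α, i + 1) =>
            co (pd (Sum.inl (α, i)) f) (m - Finsupp.single (Sum.inl (α, i + 1)) 1)
        | _ => (0 : ℂ)) := by rfl
  rw [this]
  apply Finset.sum_congr rfl
  intro v _
  rcases v with ⟨α, i⟩ | u
  · cases i with
    | zero => rfl
    | succ j => rfl
  · rfl

lemma dxF_ev (f : DP N) (m : Mon N) (p : Fin N × ℕ) :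
    dxF f m (ev p) = co (pd (Sum.inl p) f) (m - Finsupp.single (ev p) 1) := rfl

lemma dxF_not_range (f : DP N) (m : Mon N) (v : DVar N) (hv : v ∉ Set.range (ev (N := N))) :
    dxF f m v = 0 := by
  rcases v with ⟨α, i⟩ | u
  · cases i with
    | zero => rfl
    | succ j => exact absurd ⟨(α, j), rfl⟩ hv
  · rfl

lemma co_dx_pairs (f : DP N) (m : Mon N) : co (dx f) m = ∑ p ∈ PF m, dxP f m p := by
  rw [co_dx, PF, ← Finset.sum_preimage ev m.support ev_inj.injOn (dxF f m)
    (fun v _ hv => dxF_not_range f m v hv)]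
  apply Finset.sum_congr rfl
  intro p hp
  rw [Finset.mem_preimage, Finsupp.mem_support_iff] at hp
  rw [dxF_ev, dxP, if_neg hp]


-- ## dx linearity
lemma dxP_def' {f : DP N} {m : Mon N} {p : Fin N × ℕ} (h : m (ev p) ≠ 0) :
    dxP f m p = co (pd (Sum.inl p) f) (m - Finsupp.single (ev p) 1) := if_neg h

lemma dx_add (f g : DP N) : dx (f + g) = dx f + dx g := by
  apply ext_co; intro m
  rw [co_add, co_dx_pairs, co_dx_pairs, co_dx_pairs, ← Finset.sum_add_distrib]
  apply Finset.sum_congr rfl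
  intro p hp
  rw [mem_PF] at hp
  rw [dxP_def' hp, dxP_def' hp, dxP_def' hp, pd_add, co_add]

lemma dx_smul (c : ℂ) (f : DP N) : dx (c • f) = c • dx f := by
  apply ext_co; intro m
  rw [co_smul, co_dx_pairs, co_dx_pairs, Finset.mul_sum]
  apply Finset.sum_congr rfl
  intro p hp
  rw [mem_PF] at hp
  rw [dxP_def' hp, dxP_def' hp, pd_smul, co_smul]

@[simp] lemma dx_zero : dx (0 : DP N) = 0 := by
  apply ext_co; intro m
  rw [co_dx_pairs, co_zero]
  apply Finset.sum_eq_zero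
  intro p hp
  rw [mem_PF] at hp
  rw [dxP_def' hp, pd_zero, co_zero]

lemma dx_sum {ι : Type*} (s : Finset ι) (F : ι → DP N) :
    dx (∑ i ∈ s, F i) = ∑ i ∈ s, dx (F i) := by
  classical
  induction s using Finset.induction_on with
  | empty => simp
  | insert _ _ h ih => rw [Finset.sum_insert h, dx_add, ih, Finset.sum_insert h]

lemma dx_sub (f g : DP N) : dx (f - g) = dx f - dx g := by
  have : f - g = f + (-1 : ℂ) • g := by rw [neg_one_smul]; ring
  rw [this, dx_add, dx_smul, neg_one_smul]; ring

lemma dx_iter_add (n : ℕ) (f g : DP N) : dx^[n] (f + g) = dx^[n] f + dx^[n] g := by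
  induction n generalizing f g with
  | zero => rfl
  | succ k ih => rw [Function.iterate_succ_apply, dx_add, ih, Function.iterate_succ_apply,
      Function.iterate_succ_apply]

lemma dx_iter_smul (n : ℕ) (c : ℂ) (f : DP N) : dx^[n] (c • f) = c • dx^[n] f := by
  induction n generalizing f with
  | zero => rfl
  | succ k ih => rw [Function.iterate_succ_apply, dx_smul, ih, Function.iterate_succ_apply]

@[simp] lemma dx_iter_zero (n : ℕ) : dx^[n] (0 : DP N) = 0 := by
  induction n with
  | zero => rfl
  | succ k ih => rw [Function.iterate_succ_apply, dx_zero, ih]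

lemma dx_iter_sum {ι : Type*} (n : ℕ) (s : Finset ι) (F : ι → DP N) :
    dx^[n] (∑ i ∈ s, F i) = ∑ i ∈ s, dx^[n] (F i) := by
  classical
  induction s using Finset.induction_on with
  | empty => simp
  | insert _ _ h ih => rw [Finset.sum_insert h, dx_iter_add, ih, Finset.sum_insert h]

-- ## the jet weight J
def jet : DVar N → ℕ
  | Sum.inl (_, i) => i
  | Sum.inr _ => 0

def J (m : Mon N) : ℕ := m.sum fun v k => jet v * k

lemma J_add (m n : Mon N) : J (m + n) = J m + J n := by
  unfold J
  rw [Finsupp.sum_add_index]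
  · intro v _; exact (mul_zero _)
  · intro v _ k l; exact mul_add _ _ _

lemma J_single (v : DVar N) (k : ℕ) : J (Finsupp.single v k) = jet v * k := by
  simp [J, Finsupp.sum_single_index]

lemma sub_add_single {m : Mon N} {v : DVar N} (h : m v ≠ 0) :
    (m - Finsupp.single v 1) + Finsupp.single v 1 = m := by
  ext w
  simp only [Finsupp.add_apply, Finsupp.tsub_apply, Finsupp.single_apply]
  by_cases hw : v = w
  · subst hw; simp only [if_pos trivial]; omega
  · simp [hw]

lemma J_sub_single {m : Mon N} {v : DVar N} (h : m v ≠ 0) :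
    J (m - Finsupp.single v 1) + jet v = J m := by
  conv_rhs => rw [← sub_add_single h]
  rw [J_add, J_single, mul_one]

/-- the monomial referenced by a `dx`-term -/
lemma J_dx_move {m : Mon N} {p : Fin N × ℕ} (h : m (ev p) ≠ 0) :
    J ((m - Finsupp.single (ev p) 1) + Finsupp.single (Sum.inl p) 1) + 1 = J m := by
  rw [J_add, J_single]
  have := J_sub_single h
  have hj : jet (ev (N := N) p) = p.2 + 1 := rfl
  have hj2 : jet (Sum.inl p : DVar N) = p.2 := rfl
  omega

-- ## vanishing bounds
lemma co_dx_iter_eq_zero (n : ℕ) (f : DP N) (m : Mon N) (h : J m < n) :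
    co (dx^[n] f) m = 0 := by
  induction n generalizing f m with
  | zero => omega
  | succ k ih =>
    rw [Function.iterate_succ_apply', co_dx_pairs]
    apply Finset.sum_eq_zero
    intro p hp
    rw [mem_PF] at hp
    rw [dxP_def' hp, co_pd]
    have hJ := J_dx_move hp
    rw [ih _ _ (by omega), mul_zero]

lemma co_mul_dx_iter_eq_zero (a b : DP N) (n : ℕ) (m : Mon N) (h : J m < n) :
    co (a * dx^[n] b) m = 0 := by
  rw [co_mul]
  apply Finset.sum_eq_zero
  intro q hq
  rw [Finset.HasAntidiagonal.mem_antidiagonal] at hq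
  have : J q.2 ≤ J m := by rw [← hq, J_add]; omega
  rw [co_dx_iter_eq_zero n b q.2 (by omega), mul_zero]

lemma co_dx_iter_mul_eq_zero (a b : DP N) (n : ℕ) (m : Mon N) (h : J m < n) :
    co (dx^[n] a * b) m = 0 := by
  rw [co_mul]
  apply Finset.sum_eq_zero
  intro q hq
  rw [Finset.HasAntidiagonal.mem_antidiagonal] at hq
  have : J q.1 ≤ J m := by rw [← hq, J_add]; omega
  rw [co_dx_iter_eq_zero n a q.1 (by omega), zero_mul]

-- ## commutator of pd and dx
/-- the lowering operator appearing in `[pd v, dx]` -/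
noncomputable def low : DVar N → DP N → DP N
  | Sum.inl (α, i + 1) => pd (Sum.inl (α, i))
  | _ => fun _ => 0

lemma add_single_sub_self (m : Mon N) (v : DVar N) :
    (m + Finsupp.single v 1) - Finsupp.single v 1 = m := by
  ext w
  simp only [Finsupp.add_apply, Finsupp.tsub_apply, Finsupp.single_apply]
  omega

lemma add_single_sub_swap {v w : DVar N} (m : Mon N) (h : v ≠ w) :
    (m + Finsupp.single v 1) - Finsupp.single w 1
      = (m - Finsupp.single w 1) + Finsupp.single v 1 := by
  ext u
  simp only [Finsupp.add_apply, Finsupp.tsub_apply, Finsupp.single_apply]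
  by_cases hu : w = u
  · subst hu
    rw [if_neg (fun hh => h hh)]
    omega
  · simp [hu]

lemma sub_single_apply_ne {m : Mon N} {v w : DVar N} (h : v ≠ w) :
    (m - Finsupp.single w 1 : Mon N) v = m v := by
  rw [Finsupp.tsub_apply, Finsupp.single_apply, if_neg (fun hh : w = v => h hh.symm)]
  omega

lemma add_single_apply_ne {m : Mon N} {v w : DVar N} (h : v ≠ w) :
    (m + Finsupp.single w 1 : Mon N) v = m v := by
  rw [Finsupp.add_apply, Finsupp.single_apply, if_neg (fun hh : w = v => h hh.symm), add_zero]

lemma pd_dx (v : DVar N) (f : DP N) : pd v (dx f) = dx (pd v f) + low v f := by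
  apply ext_co; intro m
  rw [co_add, co_pd, co_dx_pairs, co_dx_pairs, Finset.mul_sum]
  have hsub : PF m ⊆ PF (m + Finsupp.single v 1) := by
    intro p hp
    rw [mem_PF] at hp ⊢
    simp only [Finsupp.add_apply] at *
    omega
  rw [show (∑ p ∈ PF m, dxP (pd v f) m p)
      = ∑ p ∈ PF (m + Finsupp.single v 1), dxP (pd v f) m p from
    Finset.sum_subset hsub (by
      intro p _ hp
      rw [mem_PF, not_not] at hp
      exact if_pos hp)]
  have claim : ∀ p ∈ PF (m + Finsupp.single v 1),
      ((m v : ℂ) + 1) * dxP f (m + Finsupp.single v 1) p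
        = dxP (pd v f) m p + (if v = ev p then co (pd (Sum.inl p) f) m else 0) := by
    intro p hp
    rw [mem_PF] at hp
    rw [dxP_def' hp]
    by_cases hv : v = ev p
    · subst hv
      rw [if_pos rfl, add_single_sub_self]
      unfold dxP
      by_cases hm : m (ev p) = 0
      · rw [if_pos hm, zero_add, hm]
        push_cast; ring
      · rw [if_neg hm, pd_pd]
        have hrw : co (pd (ev p) (pd (Sum.inl p) f)) (m - Finsupp.single (ev p) 1)
            = ((((m - Finsupp.single (ev p) 1) : Mon N) (ev p) : ℂ) + 1)
              * co (pd (Sum.inl p) f) m := by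
          rw [co_pd, sub_add_single hm]
        rw [hrw, Finsupp.tsub_apply, Finsupp.single_apply, if_pos rfl]
        have hcast : ((m (ev p) - 1 : ℕ) : ℂ) = (m (ev p) : ℂ) - 1 := by
          have := Nat.one_le_iff_ne_zero.mpr hm
          push_cast [Nat.cast_sub this]; ring
        rw [hcast]; ring
    · rw [if_neg hv, add_zero]
      have hm : m (ev p) ≠ 0 := by
        rw [add_single_apply_ne (fun hh : ev p = v => hv hh.symm)] at hp
        exact hp
      rw [dxP_def' hm, pd_pd, add_single_sub_swap m hv]
      simp only [co_pd]
      rw [sub_single_apply_ne hv]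
  rw [Finset.sum_congr rfl claim, Finset.sum_add_distrib]
  congr 1
  rcases v with ⟨α, i⟩ | u
  · cases i with
    | zero =>
      rw [show low (Sum.inl (α, 0) : DVar N) f = 0 from rfl, co_zero]
      apply Finset.sum_eq_zero
      intro p _
      rw [if_neg (by simp only [ev, Sum.inl.injEq, Prod.mk.injEq, not_and]; intro _ h; omega)]
    | succ j =>
      rw [show low (Sum.inl (α, j + 1) : DVar N) f = pd (Sum.inl (α, j)) f from rfl]
      rw [Finset.sum_eq_single_of_mem ((α, j) : Fin N × ℕ) ?hmem ?hzero]
      · rw [show ev ((α, j) : Fin N × ℕ) = Sum.inl (α, j + 1) from rfl, if_pos rfl]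
      case hmem =>
        rw [mem_PF]
        have : ev ((α, j) : Fin N × ℕ) = Sum.inl (α, j + 1) := rfl
        rw [this, Finsupp.add_apply, Finsupp.single_apply, if_pos rfl]
        omega
      case hzero =>
        intro p _ hne
        rw [if_neg (fun hh => hne (ev_inj hh.symm))]
  · rw [show low (Sum.inr u : DVar N) f = 0 from rfl, co_zero]
    apply Finset.sum_eq_zero
    intro p _
    rw [if_neg (by intro hh; cases hh)]

-- ## finsum helper
lemma finsum_co_eq_sum (F : ℕ → ℂ) (T : ℕ) (hF : ∀ i, T < i → F i = 0) :
    ∑ᶠ i, F i = ∑ i ∈ Finset.range (T + 1), F i := by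
  apply finsum_eq_finset_sum_of_support_subset
  intro i hi
  simp only [Finset.coe_range, Set.mem_Iio]
  by_contra hc
  exact hi (hF i (by omega))

-- ## vd basics
lemma co_vd (μ : Fin N) (f : DP N) (m : Mon N) :
    co (vd μ f) m = ∑ᶠ i : ℕ, ((-1 : ℂ) ^ i) * co (dx^[i] (pd (Sum.inl (μ, i)) f)) m := by rfl

lemma co_vd_eq_sum (μ : Fin N) (f : DP N) (m : Mon N) {T : ℕ} (h : J m ≤ T) :
    co (vd μ f) m
      = ∑ i ∈ Finset.range (T + 1), ((-1 : ℂ) ^ i) * co (dx^[i] (pd (Sum.inl (μ, i)) f)) m := by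
  rw [co_vd]
  apply finsum_co_eq_sum
  intro i hi
  rw [co_dx_iter_eq_zero i _ m (by omega), mul_zero]

lemma vd_add (μ : Fin N) (f g : DP N) : vd μ (f + g) = vd μ f + vd μ g := by
  apply ext_co; intro m
  rw [co_add, co_vd_eq_sum μ _ m (le_refl (J m)), co_vd_eq_sum μ _ m (le_refl (J m)),
    co_vd_eq_sum μ _ m (le_refl (J m)), ← Finset.sum_add_distrib]
  apply Finset.sum_congr rfl
  intro i _
  rw [pd_add, dx_iter_add, co_add]
  ring

lemma vd_smul (μ : Fin N) (c : ℂ) (f : DP N) : vd μ (c • f) = c • vd μ f := by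
  apply ext_co; intro m
  rw [co_smul, co_vd_eq_sum μ _ m (le_refl (J m)), co_vd_eq_sum μ _ m (le_refl (J m)),
    Finset.mul_sum]
  apply Finset.sum_congr rfl
  intro i _
  rw [pd_smul, dx_iter_smul, co_smul]
  ring

lemma vd_sub (μ : Fin N) (f g : DP N) : vd μ (f - g) = vd μ f - vd μ g := by
  have h1 : f - g = f + (-1 : ℂ) • g := by rw [neg_one_smul]; ring
  rw [h1, vd_add, vd_smul, neg_one_smul]; ring

lemma vd_dx (μ : Fin N) (f : DP N) : vd μ (dx f) = 0 := by
  apply ext_co; intro m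
  rw [co_zero, co_vd_eq_sum μ _ m (le_refl (J m))]
  set a : ℕ → ℂ := fun i => (-1 : ℂ) ^ i * co (dx^[i + 1] (pd (Sum.inl (μ, i)) f)) m with ha
  have hterm : ∀ k, (-1 : ℂ) ^ (k + 1) * co (dx^[k + 1] (pd (Sum.inl (μ, k + 1)) (dx f))) m
      = a (k + 1) - a k := by
    intro k
    rw [pd_dx, dx_iter_add, co_add,
      show low (Sum.inl (μ, k + 1) : DVar N) f = pd (Sum.inl (μ, k)) f from rfl,
      show dx^[k + 1] (dx (pd (Sum.inl (μ, k + 1)) f)) = dx^[k + 2] (pd (Sum.inl (μ, k + 1)) f)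
        from (Function.iterate_succ_apply dx (k + 1) _).symm]
    simp only [ha]
    rw [pow_succ]
    ring
  rw [Finset.sum_range_succ']
  have h0 : (-1 : ℂ) ^ 0 * co (dx^[0] (pd (Sum.inl (μ, 0)) (dx f))) m = a 0 := by
    simp only [ha, Function.iterate_zero_apply, pow_zero, one_mul, Function.iterate_one, zero_add]
    rw [pd_dx, show low (Sum.inl (μ, 0) : DVar N) f = 0 from rfl, add_zero]
  rw [h0, Finset.sum_congr rfl (fun k _ => hterm k), Finset.sum_range_sub a (J m)]
  have : co (dx^[J m + 1] (pd (Sum.inl (μ, J m)) f)) m = 0 :=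
    co_dx_iter_eq_zero _ _ _ (by omega)
  simp only [ha, this, mul_zero]
  ring

lemma isConst_pd_eq_zero {f : DP N} (h : IsConst f) (w : Fin N × ℕ) :
    pd (Sum.inl w) f = 0 := by
  apply ext_co; intro m
  rw [co_pd, co_zero]
  have : co f (m + Finsupp.single (Sum.inl w) 1) = 0 := by
    by_contra hc
    have := h _ hc (Sum.inl w) (by
      rw [Finsupp.mem_support_iff, Finsupp.add_apply, Finsupp.single_apply, if_pos rfl]
      omega)
    cases this
  rw [this, mul_zero]

lemma vd_const {f : DP N} (h : IsConst f) (μ : Fin N) : vd μ f = 0 := by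
  apply ext_co; intro m
  rw [co_zero, co_vd_eq_sum μ _ m (le_refl (J m))]
  apply Finset.sum_eq_zero
  intro i _
  rw [isConst_pd_eq_zero h, dx_iter_zero, co_zero, mul_zero]

noncomputable def vdL (μ : Fin N) : DP N →ₗ[ℂ] DP N where
  toFun := vd μ
  map_add' := vd_add μ
  map_smul' := vd_smul μ

lemma vd_mem_lfSub {x : DP N} (hx : x ∈ lfSub N) (μ : Fin N) : vd μ x = 0 := by
  have hle : lfSub N ≤ LinearMap.ker (vdL μ) := by
    apply sup_le
    · intro f hf
      exact LinearMap.mem_ker.mpr (vd_const hf μ)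
    · rw [Submodule.span_le]
      rintro _ ⟨g, rfl⟩
      exact LinearMap.mem_ker.mpr (vd_dx μ g)
  exact LinearMap.mem_ker.mp (hle hx)

lemma intg_rep (h : LF N) : intg (rep h) = h :=
  (Submodule.Quotient.mk_surjective (lfSub N) h).choose_spec

lemma vdQ_intg (μ : Fin N) (f : DP N) : vdQ μ (intg f) = vd μ f := by
  have hmem : rep (intg f) - f ∈ lfSub N := by
    rw [← Submodule.Quotient.eq]
    exact intg_rep (intg f)
  have : vd μ (rep (intg f)) = vd μ ((rep (intg f) - f) + f) := by rw [sub_add_cancel]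
  rw [vdQ, this, vd_add, vd_mem_lfSub hmem, zero_add]

lemma intg_dx (f : DP N) : intg (dx f) = 0 := by
  rw [intg, Submodule.mkQ_apply]
  rw [Submodule.Quotient.mk_eq_zero]
  exact le_sup_right (α := Submodule ℂ (DP N)) (Submodule.subset_span ⟨f, rfl⟩)

-- ## decomposition of vd
noncomputable def Gd (μ : Fin N) (f : DP N) : DP N :=
  ofCo fun m => ∑ᶠ i : ℕ, ((-1 : ℂ) ^ (i + 1)) * co (dx^[i] (pd (Sum.inl (μ, i + 1)) f)) m

lemma J_pos_of_mem_PF {m : Mon N} {p : Fin N × ℕ} (h : m (ev p) ≠ 0) : 1 ≤ J m := by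
  have := J_sub_single h
  have hj : jet (ev (N := N) p) = p.2 + 1 := rfl
  omega

lemma vd_decomp (μ : Fin N) (f : DP N) :
    vd μ f = pd (Sum.inl (μ, 0)) f + dx (Gd μ f) := by
  apply ext_co; intro m
  have hdxG : co (dx (Gd μ f)) m
      = ∑ i ∈ Finset.range (J m), ((-1 : ℂ) ^ (i + 1))
          * co (dx^[i + 1] (pd (Sum.inl (μ, i + 1)) f)) m := by
    rw [co_dx_pairs]
    have hterm : ∀ p ∈ PF m, dxP (Gd μ f) m p
        = ∑ i ∈ Finset.range (J m), ((-1 : ℂ) ^ (i + 1))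
            * dxP (dx^[i] (pd (Sum.inl (μ, i + 1)) f)) m p := by
      intro p hp
      rw [mem_PF] at hp
      rw [dxP_def' hp, co_pd]
      have hJm'' : J ((m - Finsupp.single (ev p) 1) + Finsupp.single (Sum.inl p) 1) + 1 = J m :=
        J_dx_move hp
      have : co (Gd μ f) ((m - Finsupp.single (ev p) 1) + Finsupp.single (Sum.inl p) 1)
          = ∑ i ∈ Finset.range (J m), ((-1 : ℂ) ^ (i + 1))
              * co (dx^[i] (pd (Sum.inl (μ, i + 1)) f))
                  ((m - Finsupp.single (ev p) 1) + Finsupp.single (Sum.inl p) 1) := by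
        rw [Gd, co_ofCo]
        have h1 : J m = (J m - 1) + 1 := by
          have := J_pos_of_mem_PF hp; omega
        rw [finsum_co_eq_sum _ (J m - 1) ?hvan, ← h1]
        case hvan =>
          intro i hi
          rw [co_dx_iter_eq_zero i _ _ (by omega), mul_zero]
      rw [this, Finset.mul_sum]
      apply Finset.sum_congr rfl
      intro i _
      rw [dxP_def' hp, co_pd]
      ring
    rw [Finset.sum_congr rfl hterm, Finset.sum_comm]
    apply Finset.sum_congr rfl
    intro i _
    rw [← Finset.mul_sum, ← co_dx_pairs,
      show dx (dx^[i] (pd (Sum.inl (μ, i + 1)) f)) = dx^[i + 1] (pd (Sum.inl (μ, i + 1)) f)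
        from (Function.iterate_succ_apply' dx i _).symm]
  rw [co_add, hdxG, co_vd_eq_sum μ f m (le_refl (J m)), Finset.sum_range_succ']
  simp only [pow_zero, one_mul, Function.iterate_zero_apply]
  ring

lemma intg_vd (μ : Fin N) (f : DP N) : intg (vd μ f) = intg (pd (Sum.inl (μ, 0)) f) := by
  rw [vd_decomp, map_add, intg_dx, add_zero]

lemma vdQ_def (μ : Fin N) (hh : LF N) : vdQ μ hh = vd μ (rep hh) := rfl

-- ## variables and constants
lemma co_X (w : DVar N) (m : Mon N) :
    co (MvPowerSeries.X w : DP N) m = if m = Finsupp.single w 1 then 1 else 0 := by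
  rw [co, MvPowerSeries.coeff_X]

lemma co_one' (m : Mon N) : co (1 : DP N) m = if m = 0 then 1 else 0 := by
  rw [co, MvPowerSeries.coeff_one]

lemma pd_X (v w : DVar N) :
    pd v (MvPowerSeries.X w : DP N) = if v = w then 1 else 0 := by
  apply ext_co; intro m
  rw [co_pd, co_X]
  by_cases h : v = w
  · subst h
    rw [if_pos rfl, co_one']
    by_cases hm : m = 0
    · subst hm
      rw [if_pos (by rw [zero_add]), if_pos rfl]
      simp
    · rw [if_neg (fun hh => hm (add_eq_right.mp hh)), if_neg hm, mul_zero]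
  · rw [if_neg h, co_zero]
    rw [if_neg ?hne, mul_zero]
    case hne =>
      intro hh
      have hv1 : (m + Finsupp.single v 1 : Mon N) v = (Finsupp.single w 1 : Mon N) v := by
        rw [hh]
      rw [Finsupp.add_apply, Finsupp.single_eq_same,
        Finsupp.single_eq_of_ne' (fun h2 : w = v => h h2.symm)] at hv1
      omega

lemma pd_one (v : DVar N) : pd v (1 : DP N) = 0 := by
  apply ext_co; intro m
  rw [co_pd, co_zero, co_one']
  rw [if_neg ?hne, mul_zero]
  case hne =>
    intro hh
    have hv1 : (m + Finsupp.single v 1 : Mon N) v = (0 : Mon N) v := by rw [hh]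
    rw [Finsupp.add_apply, Finsupp.single_eq_same, Finsupp.coe_zero, Pi.zero_apply] at hv1
    omega

lemma dx_one : dx (1 : DP N) = 0 := by
  apply ext_co; intro m
  rw [co_dx_pairs, co_zero]
  apply Finset.sum_eq_zero
  intro p hp
  rw [mem_PF] at hp
  rw [dxP_def' hp, pd_one, co_zero]

lemma vd_sum {ι : Type*} (μ : Fin N) (s : Finset ι) (F : ι → DP N) :
    vd μ (∑ i ∈ s, F i) = ∑ i ∈ s, vd μ (F i) := by
  classical
  induction s using Finset.induction_on with
  | empty =>
    apply ext_co; intro m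
    rw [Finset.sum_empty, Finset.sum_empty, co_vd_eq_sum μ _ m (le_refl (J m)), co_zero]
    apply Finset.sum_eq_zero
    intro i _
    rw [pd_zero, dx_iter_zero, co_zero, mul_zero]
  | insert _ _ h ih => rw [Finset.sum_insert h, vd_add, ih, Finset.sum_insert h]

lemma vd_uv0 (ν μ : Fin N) : vd ν (uv μ 0) = if ν = μ then 1 else 0 := by
  apply ext_co; intro m
  rw [co_vd_eq_sum ν _ m (le_refl (J m))]
  rw [Finset.sum_eq_single 0]
  · simp only [pow_zero, one_mul, Function.iterate_zero_apply]
    rw [uv, pd_X]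
    by_cases h : ν = μ
    · subst h; rw [if_pos rfl, if_pos rfl]
    · rw [if_neg (by simp [h]), if_neg h]
  · intro i _ hi
    rw [uv, pd_X, if_neg (by simp [Sum.inl.injEq, Prod.mk.injEq]; intro _; omega),
      dx_iter_zero, co_zero, mul_zero]
  · intro hmem
    exact absurd (Finset.mem_range.mpr (by omega)) hmem

-- ## the coefficient submodule for linear independence
noncomputable def Smod (N : ℕ) : Submodule ℂ (DP N) where
  carrier := {f | ∀ ν : Fin N, co f (Finsupp.single (Sum.inl (ν, 0)) 1) = 0}
  add_mem' := by intro f g hf hg ν; rw [co_add, hf ν, hg ν, add_zero]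
  zero_mem' := by intro ν; rw [co_zero]
  smul_mem' := by intro c f hf ν; rw [co_smul, hf ν, mul_zero]

lemma lfSub_le_Smod : lfSub N ≤ Smod N := by
  apply sup_le
  · intro f hf ν
    by_contra hc
    have := hf _ hc (Sum.inl (ν, 0)) (by
      rw [Finsupp.mem_support_iff, Finsupp.single_apply, if_pos rfl]; omega)
    cases this
  · rw [Submodule.span_le]
    rintro _ ⟨g, rfl⟩
    intro ν
    rw [co_dx_pairs]
    apply Finset.sum_eq_zero
    intro p hp
    rw [mem_PF] at hp
    exfalso
    apply hp
    rw [Finsupp.single_apply, if_neg]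
    intro hh
    have : (0 : ℕ) = p.2 + 1 := by
      simpa [ev, Sum.inl.injEq, Prod.mk.injEq] using hh
    omega

lemma co_uv0_single (μ ν : Fin N) :
    co (uv μ 0) (Finsupp.single (Sum.inl (ν, 0)) 1) = if ν = μ then 1 else 0 := by
  rw [uv, co_X]
  have hiff : (Finsupp.single (Sum.inl (ν, 0)) 1 : Mon N)
      = Finsupp.single (Sum.inl (μ, 0)) 1 ↔ ν = μ := by
    rw [Finsupp.single_left_inj one_ne_zero]
    simp
  rw [if_congr hiff rfl rfl]

-- ## Leibniz rules
lemma sum_ad_swap (m : Mon N) (F : Mon N → Mon N → ℂ) :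
    ∑ p ∈ Finset.HasAntidiagonal.antidiagonal m, F p.1 p.2 = ∑ p ∈ Finset.HasAntidiagonal.antidiagonal m, F p.2 p.1 := by
  conv_rhs => rw [← Finset.HasAntidiagonal.map_swap_antidiagonal (n := m)]
  rw [Finset.sum_map]
  rfl

lemma mon_addsub {p1 p2 m : Mon N} {v : DVar N} (h1 : p1 + p2 = m + Finsupp.single v 1)
    (h2 : p1 v ≠ 0) : (p1 - Finsupp.single v 1) + p2 = m := by
  ext u
  have hu : p1 u + p2 u = m u + (Finsupp.single v 1 : Mon N) u := by
    rw [← Finsupp.add_apply, h1, Finsupp.add_apply]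
  rw [Finsupp.add_apply, Finsupp.tsub_apply]
  rcases eq_or_ne v u with rfl | hne
  · rw [Finsupp.single_eq_same] at hu ⊢; omega
  · rw [Finsupp.single_eq_of_ne' hne] at hu ⊢; omega

lemma mon_subsub {p1 p2 m : Mon N} {w : DVar N} (h1 : p1 + p2 = m) (h2 : p1 w ≠ 0) :
    (p1 - Finsupp.single w 1) + p2 = m - Finsupp.single w 1 := by
  ext u
  have hu : p1 u + p2 u = m u := by rw [← Finsupp.add_apply, h1]
  rw [Finsupp.add_apply, Finsupp.tsub_apply, Finsupp.tsub_apply]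
  rcases eq_or_ne w u with rfl | hne
  · rw [Finsupp.single_eq_same]; omega
  · rw [Finsupp.single_eq_of_ne' hne]; omega

lemma AD_weight (v : DVar N) (m : Mon N) (F : Mon N → Mon N → ℂ) :
    ∑ p ∈ Finset.HasAntidiagonal.antidiagonal (m + Finsupp.single v 1), (((p.1 : Mon N) v : ℕ) : ℂ) * F p.1 p.2
      = ∑ p ∈ Finset.HasAntidiagonal.antidiagonal m,
          (((p.1 : Mon N) v : ℂ) + 1) * F (p.1 + Finsupp.single v 1) p.2 := by
  classical
  rw [← Finset.sum_filter_of_ne (p := fun p : Mon N × Mon N => p.1 v ≠ 0)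
    (by intro p _ hp hc; rw [hc] at hp; simp at hp)]
  symm
  apply Finset.sum_nbij' (fun p : Mon N × Mon N => (p.1 + Finsupp.single v 1, p.2))
    (fun p : Mon N × Mon N => (p.1 - Finsupp.single v 1, p.2))
  · intro p hp
    rw [Finset.HasAntidiagonal.mem_antidiagonal] at hp
    rw [Finset.mem_filter, Finset.HasAntidiagonal.mem_antidiagonal]
    refine ⟨by rw [add_right_comm, hp], ?_⟩
    simp only [Finsupp.add_apply, Finsupp.single_eq_same]; omega
  · intro p hp
    rw [Finset.mem_filter, Finset.HasAntidiagonal.mem_antidiagonal] at hp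
    rw [Finset.HasAntidiagonal.mem_antidiagonal]
    exact mon_addsub hp.1 hp.2
  · intro p _
    ext <;> simp [add_single_sub_self]
  · intro p hp
    rw [Finset.mem_filter] at hp
    ext <;> simp [sub_add_single hp.2]
  · intro p _
    simp only [Finsupp.add_apply, Finsupp.single_eq_same]
    push_cast; ring

lemma AD_guard (w : DVar N) {m : Mon N} (hm : m w ≠ 0) (A B : Mon N → ℂ) :
    ∑ p ∈ Finset.HasAntidiagonal.antidiagonal m,
        (if p.1 w = 0 then 0 else A (p.1 - Finsupp.single w 1) * B p.2)
      = ∑ p ∈ Finset.HasAntidiagonal.antidiagonal (m - Finsupp.single w 1), A p.1 * B p.2 := by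
  classical
  rw [← Finset.sum_filter_of_ne (p := fun p : Mon N × Mon N => p.1 w ≠ 0)
    (by intro p _ hp hc; rw [if_pos hc] at hp; exact hp rfl)]
  apply Finset.sum_nbij' (fun p : Mon N × Mon N => (p.1 - Finsupp.single w 1, p.2))
    (fun p : Mon N × Mon N => (p.1 + Finsupp.single w 1, p.2))
  · intro p hp
    rw [Finset.mem_filter, Finset.HasAntidiagonal.mem_antidiagonal] at hp
    rw [Finset.HasAntidiagonal.mem_antidiagonal]
    exact mon_subsub hp.1 hp.2
  · intro p hp
    rw [Finset.HasAntidiagonal.mem_antidiagonal] at hp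
    rw [Finset.mem_filter, Finset.HasAntidiagonal.mem_antidiagonal]
    refine ⟨by rw [add_right_comm, hp, sub_add_single hm], ?_⟩
    simp only [Finsupp.add_apply, Finsupp.single_eq_same]; omega
  · intro p hp
    rw [Finset.mem_filter] at hp
    ext <;> simp [sub_add_single hp.2]
  · intro p _
    ext <;> simp [add_single_sub_self]
  · intro p hp
    rw [Finset.mem_filter] at hp
    rw [if_neg hp.2]

lemma pd_mul (v : DVar N) (f g : DP N) : pd v (f * g) = pd v f * g + f * pd v g := by
  apply ext_co; intro m
  rw [co_add, co_pd, co_mul]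
  have hsplit : ∀ p ∈ Finset.HasAntidiagonal.antidiagonal (m + Finsupp.single v 1),
      ((m v : ℂ) + 1) * (co f p.1 * co g p.2)
        = (((p.1 : Mon N) v : ℕ) : ℂ) * (co f p.1 * co g p.2)
          + (((p.2 : Mon N) v : ℕ) : ℂ) * (co f p.1 * co g p.2) := by
    intro p hp
    rw [Finset.HasAntidiagonal.mem_antidiagonal] at hp
    have hthis : p.1 v + p.2 v = m v + 1 := by
      have := congrArg (fun z : Mon N => z v) hp
      simp only [Finsupp.add_apply, Finsupp.single_eq_same] at this
      exact this
    have hc : ((p.1 v : ℕ) : ℂ) + ((p.2 v : ℕ) : ℂ) = (m v : ℂ) + 1 := by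
      exact_mod_cast congrArg (Nat.cast (R := ℂ)) hthis
    rw [← hc]; ring
  rw [Finset.mul_sum, Finset.sum_congr rfl hsplit, Finset.sum_add_distrib]
  congr 1
  · rw [AD_weight v m fun a b => co f a * co g b, co_mul]
    apply Finset.sum_congr rfl
    intro p _
    rw [co_pd]; ring
  · rw [sum_ad_swap _ fun a b => (((b : Mon N) v : ℕ) : ℂ) * (co f a * co g b)]
    have hre : ∀ p ∈ Finset.HasAntidiagonal.antidiagonal (m + Finsupp.single v 1),
        (((p.1 : Mon N) v : ℕ) : ℂ) * (co f p.2 * co g p.1)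
          = (((p.1 : Mon N) v : ℕ) : ℂ) * (co g p.1 * co f p.2) := by
      intro p _; ring
    rw [Finset.sum_congr rfl hre, AD_weight v m fun a b => co g a * co f b,
      mul_comm f (pd v g), co_mul]
    apply Finset.sum_congr rfl
    intro p _
    rw [co_pd]; ring

lemma dx_mul (f g : DP N) : dx (f * g) = dx f * g + f * dx g := by
  apply ext_co; intro m
  have claim1 : ∀ F G : DP N, co (dx F * G) m
      = ∑ p ∈ PF m, co (pd (Sum.inl p) F * G) (m - Finsupp.single (ev p) 1) := by
    intro F G
    rw [co_mul]
    have hin : ∀ q ∈ Finset.HasAntidiagonal.antidiagonal m, co (dx F) q.1 * co G q.2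
        = ∑ p ∈ PF m, dxP F q.1 p * co G q.2 := by
      intro q hq
      rw [Finset.HasAntidiagonal.mem_antidiagonal] at hq
      rw [co_dx_pairs, Finset.sum_mul]
      apply Finset.sum_subset
      · intro p hp
        rw [mem_PF] at hp ⊢
        have : q.1 (ev p) ≤ m (ev p) := by
          rw [← hq]; simp [Finsupp.add_apply]
        omega
      · intro p _ hp
        rw [mem_PF, not_not] at hp
        rw [dxP, if_pos hp, zero_mul]
    rw [Finset.sum_congr rfl hin, Finset.sum_comm]
    apply Finset.sum_congr rfl
    intro p hp
    rw [mem_PF] at hp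
    have : ∀ q ∈ Finset.HasAntidiagonal.antidiagonal m, dxP F q.1 p * co G q.2
        = if q.1 (ev p) = 0 then 0
          else co (pd (Sum.inl p) F) (q.1 - Finsupp.single (ev p) 1) * co G q.2 := by
      intro q _
      rw [dxP]
      split_ifs
      · rw [zero_mul]
      · rfl
    rw [Finset.sum_congr rfl this, AD_guard (ev p) hp, ← co_mul]
  rw [co_add, claim1, co_dx_pairs]
  have claim2 : co (f * dx g) m
      = ∑ p ∈ PF m, co (f * pd (Sum.inl p) g) (m - Finsupp.single (ev p) 1) := by
    rw [mul_comm f (dx g), claim1]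
    apply Finset.sum_congr rfl
    intro p _
    rw [mul_comm]
  rw [claim2, ← Finset.sum_add_distrib]
  apply Finset.sum_congr rfl
  intro p hp
  rw [mem_PF] at hp
  rw [dxP_def' hp, pd_mul, co_add]

-- ## iterated commutator and Leibniz
lemma pd_dx_iter (ρ : Fin N) (i : ℕ) :
    ∀ (s : ℕ) (f : DP N), pd (Sum.inl (ρ, s)) (dx^[i] f)
      = ∑ k ∈ Finset.range (s + 1),
          ((i.choose k : ℕ) : ℂ) • dx^[i - k] (pd (Sum.inl (ρ, s - k)) f) := by
  induction i with
  | zero =>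
    intro s f
    rw [Finset.sum_eq_single 0]
    · simp
    · intro k _ hk
      rw [Nat.choose_eq_zero_of_lt (by omega)]
      simp
    · intro hmem
      exact absurd (Finset.mem_range.mpr (by omega)) hmem
  | succ i ih =>
    intro s f
    rw [Function.iterate_succ_apply', pd_dx]
    cases s with
    | zero =>
      rw [show low (Sum.inl (ρ, 0) : DVar N) (dx^[i] f) = 0 from rfl, add_zero, ih 0 f,
        Finset.sum_range_one, Finset.sum_range_one]
      simp only [Nat.choose_zero_right, Nat.cast_one, one_smul, Nat.sub_zero]
      rw [← Function.iterate_succ_apply' dx]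
    | succ s' =>
      rw [show low (Sum.inl (ρ, s' + 1) : DVar N) (dx^[i] f)
          = pd (Sum.inl (ρ, s')) (dx^[i] f) from rfl, ih (s' + 1) f, ih s' f, dx_sum,
        Finset.sum_range_succ' _ (s' + 1), Finset.sum_range_succ' _ (s' + 1)]
      have h0 : dx (((i.choose 0 : ℕ) : ℂ) • dx^[i - 0] (pd (Sum.inl (ρ, s' + 1 - 0)) f))
          = (((i + 1).choose 0 : ℕ) : ℂ)
              • dx^[i + 1 - 0] (pd (Sum.inl (ρ, s' + 1 - 0)) f) := by
        simp only [Nat.choose_zero_right, Nat.cast_one, one_smul, Nat.sub_zero]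
        rw [← Function.iterate_succ_apply' dx]
      rw [h0, add_right_comm, ← Finset.sum_add_distrib]
      congr 1
      apply Finset.sum_congr rfl
      intro k _
      rw [dx_smul, ← Function.iterate_succ_apply' dx]
      simp only [Nat.succ_eq_add_one]
      by_cases hki : k + 1 ≤ i
      · have h1 : i - (k + 1) + 1 = i - k := by omega
        have h2 : i + 1 - (k + 1) = i - k := by omega
        have h3 : s' + 1 - (k + 1) = s' - k := by omega
        rw [h1, h2, h3, ← add_smul]
        congr 1
        rw [Nat.choose_succ_succ]
        push_cast; ring
      · have hzero : i.choose (k + 1) = 0 := Nat.choose_eq_zero_of_lt (by omega)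
        have h2 : i + 1 - (k + 1) = i - k := Nat.succ_sub_succ i k
        have h3 : s' + 1 - (k + 1) = s' - k := Nat.succ_sub_succ s' k
        have h4 : (i + 1).choose (k + 1) = i.choose k := by
          rw [Nat.choose_succ_succ, hzero, add_zero]
        rw [h2, h3, h4, hzero]
        simp

lemma dx_iter_mul (n : ℕ) (f g : DP N) :
    dx^[n] (f * g)
      = ∑ j ∈ Finset.range (n + 1), ((n.choose j : ℕ) : ℂ) • (dx^[j] f * dx^[n - j] g) := by
  induction n with
  | zero => simp
  | succ n ih =>
    rw [Function.iterate_succ_apply', ih, dx_sum]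
    have hterm : ∀ j ∈ Finset.range (n + 1),
        dx (((n.choose j : ℕ) : ℂ) • (dx^[j] f * dx^[n - j] g))
          = ((n.choose j : ℕ) : ℂ) • (dx^[j + 1] f * dx^[n - j] g)
            + ((n.choose j : ℕ) : ℂ) • (dx^[j] f * dx^[n + 1 - j] g) := by
      intro j hj
      rw [Finset.mem_range] at hj
      have hnj : n + 1 - j = (n - j) + 1 := by omega
      rw [dx_smul, dx_mul, smul_add, hnj, Function.iterate_succ_apply' dx j,
        Function.iterate_succ_apply' dx (n - j)]
    rw [Finset.sum_congr rfl hterm, Finset.sum_add_distrib]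
    rw [Finset.sum_range_succ' (fun j => (((n + 1).choose j : ℕ) : ℂ)
      • (dx^[j] f * dx^[n + 1 - j] g)) (n + 1)]
    rw [Finset.sum_range_succ'
      (fun j => ((n.choose j : ℕ) : ℂ) • (dx^[j] f * dx^[n + 1 - j] g)) n]
    have hzz : ∑ j ∈ Finset.range n,
        ((n.choose (j + 1) : ℕ) : ℂ) • (dx^[j + 1] f * dx^[n + 1 - (j + 1)] g)
        = ∑ j ∈ Finset.range (n + 1),
          ((n.choose (j + 1) : ℕ) : ℂ) • (dx^[j + 1] f * dx^[n + 1 - (j + 1)] g) := by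
      rw [Finset.sum_range_succ, Nat.choose_succ_self, Nat.cast_zero, zero_smul, add_zero]
    rw [hzz]
    have hfix : ∀ j ∈ Finset.range (n + 1),
        ((n.choose j : ℕ) : ℂ) • (dx^[j + 1] f * dx^[n - j] g)
          = ((n.choose j : ℕ) : ℂ) • (dx^[j + 1] f * dx^[n + 1 - (j + 1)] g) := by
      intro j _
      rw [Nat.succ_sub_succ]
    rw [Finset.sum_congr rfl hfix, ← add_assoc, ← Finset.sum_add_distrib]
    congr 1
    · apply Finset.sum_congr rfl
      intro j _
      rw [← add_smul]
      congr 1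
      rw [Nat.choose_succ_succ]
      push_cast; ring
    · simp

-- ## truncated variational derivative and agreement
noncomputable def vdT (μ : Fin N) (T : ℕ) (f : DP N) : DP N :=
  ∑ i ∈ Finset.range (T + 1), ((-1 : ℂ) ^ i) • dx^[i] (pd (Sum.inl (μ, i)) f)

def Ag (K : ℕ) (a b : DP N) : Prop := ∀ m : Mon N, J m ≤ K → co a m = co b m

lemma Ag_vdT {K T : ℕ} (hKT : K ≤ T) (μ : Fin N) (f : DP N) :
    Ag K (vd μ f) (vdT μ T f) := by
  intro m hm
  rw [co_vd_eq_sum μ f m (le_trans hm hKT), vdT, co_sum]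
  apply Finset.sum_congr rfl
  intro i _
  rw [co_smul]

lemma Ag_dx {K : ℕ} {a b : DP N} (h : Ag K a b) : Ag K (dx a) (dx b) := by
  intro m hm
  rw [co_dx_pairs, co_dx_pairs]
  apply Finset.sum_congr rfl
  intro p hp
  rw [mem_PF] at hp
  rw [dxP_def' hp, dxP_def' hp, co_pd, co_pd]
  congr 1
  exact h _ (by have := J_dx_move hp; omega)

lemma Ag_dx_iter {K : ℕ} (n : ℕ) {a b : DP N} (h : Ag K a b) :
    Ag K (dx^[n] a) (dx^[n] b) := by
  induction n generalizing a b with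
  | zero => exact h
  | succ k ih =>
    rw [Function.iterate_succ_apply, Function.iterate_succ_apply]
    exact ih (Ag_dx h)

lemma Ag_mul_left {K : ℕ} (w : DP N) {a b : DP N} (h : Ag K a b) :
    Ag K (a * w) (b * w) := by
  intro m hm
  rw [co_mul, co_mul]
  apply Finset.sum_congr rfl
  intro q hq
  rw [Finset.HasAntidiagonal.mem_antidiagonal] at hq
  have : J q.1 ≤ J m := by rw [← hq, J_add]; omega
  rw [h q.1 (by omega)]

lemma Ag_pdn {K K' : ℕ} (v : DVar N) {a b : DP N} (h : Ag K a b)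
    (hK : K' + jet v ≤ K) : Ag K' (pd v a) (pd v b) := by
  intro m hm
  rw [co_pd, co_pd]
  congr 1
  apply h
  rw [J_add, J_single, mul_one]
  omega

-- ## expansion of vd applied to products
lemma co_vd_mul (ρ : Fin N) (a b : DP N) (m : Mon N) :
    co (vd ρ (a * b)) m
      = (∑ s ∈ Finset.range (J m + 1),
          (-1 : ℂ) ^ s * co (dx^[s] (pd (Sum.inl (ρ, s)) a * b)) m)
        + ∑ s ∈ Finset.range (J m + 1),
            (-1 : ℂ) ^ s * co (dx^[s] (a * pd (Sum.inl (ρ, s)) b)) m := by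
  rw [co_vd_eq_sum ρ _ m (le_refl (J m)), ← Finset.sum_add_distrib]
  apply Finset.sum_congr rfl
  intro s _
  rw [pd_mul, dx_iter_add, co_add]
  ring

lemma step3 (ρ : Fin N) (a c : DP N) (m : Mon N) :
    ∑ s ∈ Finset.range (J m + 1),
        (-1 : ℂ) ^ s * co (dx^[s] (a * pd (Sum.inl (ρ, s)) (dx c))) m
      = - ∑ s ∈ Finset.range (J m + 1),
          (-1 : ℂ) ^ s * co (dx^[s] (pd (Sum.inl (ρ, s)) c * dx a)) m := by
  have hsplit : ∀ s, co (dx^[s] (a * pd (Sum.inl (ρ, s)) (dx c))) m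
      = co (dx^[s] (a * dx (pd (Sum.inl (ρ, s)) c))) m
        + co (dx^[s] (a * low (Sum.inl (ρ, s)) c)) m := by
    intro s
    rw [pd_dx, mul_add, dx_iter_add, co_add]
  have h1 : ∑ s ∈ Finset.range (J m + 1),
      (-1 : ℂ) ^ s * co (dx^[s] (a * pd (Sum.inl (ρ, s)) (dx c))) m
      = (∑ s ∈ Finset.range (J m + 1),
          (-1 : ℂ) ^ s * co (dx^[s] (a * dx (pd (Sum.inl (ρ, s)) c))) m)
        + ∑ s ∈ Finset.range (J m + 1),
            (-1 : ℂ) ^ s * co (dx^[s] (a * low (Sum.inl (ρ, s)) c)) m := by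
    rw [← Finset.sum_add_distrib]
    apply Finset.sum_congr rfl
    intro s _
    rw [hsplit s]; ring
  have h2 : ∑ s ∈ Finset.range (J m + 1),
      (-1 : ℂ) ^ s * co (dx^[s] (a * low (Sum.inl (ρ, s)) c)) m
      = ∑ s ∈ Finset.range (J m + 1),
          (-1 : ℂ) ^ (s + 1) * co (dx^[s] (dx (a * pd (Sum.inl (ρ, s)) c))) m := by
    rw [Finset.sum_range_succ']
    have hz : (-1 : ℂ) ^ 0 * co (dx^[0] (a * low (Sum.inl (ρ, 0)) c)) m = 0 := by
      rw [show low (Sum.inl (ρ, 0) : DVar N) c = 0 from rfl, mul_zero]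
      simp
    rw [hz, add_zero]
    have hterm : ∀ k, (-1 : ℂ) ^ (k + 1) * co (dx^[k + 1] (a * low (Sum.inl (ρ, k + 1)) c)) m
        = (-1 : ℂ) ^ (k + 1) * co (dx^[k] (dx (a * pd (Sum.inl (ρ, k)) c))) m := by
      intro k
      rw [show low (Sum.inl (ρ, k + 1) : DVar N) c = pd (Sum.inl (ρ, k)) c from rfl,
        Function.iterate_succ_apply]
    rw [Finset.sum_congr rfl fun k _ => hterm k]
    rw [Finset.sum_range_succ
      (fun s => (-1 : ℂ) ^ (s + 1) * co (dx^[s] (dx (a * pd (Sum.inl (ρ, s)) c))) m) (J m)]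
    rw [show co (dx^[J m] (dx (a * pd (Sum.inl (ρ, J m)) c))) m = 0 from by
      rw [← Function.iterate_succ_apply]
      exact co_dx_iter_eq_zero _ _ _ (by omega)]
    rw [mul_zero, add_zero]
  rw [h1, h2, ← Finset.sum_add_distrib, ← Finset.sum_neg_distrib]
  apply Finset.sum_congr rfl
  intro s _
  rw [dx_mul, mul_comm (dx a) (pd (Sum.inl (ρ, s)) c), dx_iter_add, co_add, pow_succ]
  ring

-- ## binomial identities
lemma binom_alt (i : ℕ) : ∀ p b : ℕ,
    ∑ r ∈ Finset.range (i + 1), (-1 : ℂ) ^ r * (i.choose r : ℂ) * ((p + r).choose b : ℂ)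
      = if i ≤ b then (-1 : ℂ) ^ i * (p.choose (b - i) : ℂ) else 0 := by
  induction i with
  | zero =>
    intro p b
    simp
  | succ i ih =>
    intro p b
    rw [Finset.sum_range_succ']
    have hF : ∀ r, (-1 : ℂ) ^ (r + 1) * ((i + 1).choose (r + 1) : ℂ)
        * ((p + (r + 1)).choose b : ℂ)
        = (-1 : ℂ) ^ (r + 1) * (i.choose r : ℂ) * (((p + 1) + r).choose b : ℂ)
          + (-1 : ℂ) ^ (r + 1) * (i.choose (r + 1) : ℂ) * ((p + (r + 1)).choose b : ℂ) := by
      intro r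
      rw [Nat.choose_succ_succ i r, show p + (r + 1) = (p + 1) + r by ring]
      push_cast; ring
    rw [Finset.sum_congr rfl fun r _ => hF r, Finset.sum_add_distrib]
    have hG1 : ∑ r ∈ Finset.range (i + 1),
        (-1 : ℂ) ^ (r + 1) * (i.choose r : ℂ) * (((p + 1) + r).choose b : ℂ)
        = - ∑ r ∈ Finset.range (i + 1),
            (-1 : ℂ) ^ r * (i.choose r : ℂ) * (((p + 1) + r).choose b : ℂ) := by
      rw [← Finset.sum_neg_distrib]
      apply Finset.sum_congr rfl
      intro r _
      rw [pow_succ]; ring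
    have hG2 : (∑ r ∈ Finset.range (i + 1),
        (-1 : ℂ) ^ (r + 1) * (i.choose (r + 1) : ℂ) * ((p + (r + 1)).choose b : ℂ))
        + (-1 : ℂ) ^ 0 * ((i + 1).choose 0 : ℂ) * ((p + 0).choose b : ℂ)
        = ∑ r ∈ Finset.range (i + 1),
            (-1 : ℂ) ^ r * (i.choose r : ℂ) * ((p + r).choose b : ℂ) := by
      rw [show (∑ r ∈ Finset.range (i + 1),
          (-1 : ℂ) ^ (r + 1) * (i.choose (r + 1) : ℂ) * ((p + (r + 1)).choose b : ℂ)) =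
        ∑ r ∈ Finset.range (i + 1 + 1),
            (-1 : ℂ) ^ r * (i.choose r : ℂ) * ((p + r).choose b : ℂ)
          - (-1 : ℂ) ^ 0 * (i.choose 0 : ℂ) * ((p + 0).choose b : ℂ) from by
        rw [Finset.sum_range_succ' (fun r => (-1 : ℂ) ^ r * (i.choose r : ℂ)
          * ((p + r).choose b : ℂ)) (i + 1)]
        ring]
      rw [Finset.sum_range_succ, Nat.choose_succ_self]
      simp
    rw [add_assoc, hG1, hG2, ih (p + 1) b, ih p b]
    by_cases h1 : i + 1 ≤ b
    · rw [if_pos (by omega), if_pos (by omega), if_pos h1]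
      have hb : b - i = (b - (i + 1)) + 1 := by omega
      rw [hb, Nat.choose_succ_succ p (b - (i + 1))]
      push_cast [pow_succ]; ring
    · by_cases h2 : i ≤ b
      · have hib : i = b := by omega
        rw [if_pos h2, if_pos h2, if_neg h1]
        subst hib
        simp
      · rw [if_neg h2, if_neg h2, if_neg h1]
        ring

lemma binom_A (q p b S : ℕ) (hpq : p + q ≤ S) :
    ∑ s ∈ Finset.range (S + 1),
        (if p ≤ s ∧ b ≤ s
          then (-1 : ℂ) ^ (s + q) * (q.choose (s - p) : ℂ) * (s.choose b : ℂ) else 0)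
      = if q ≤ b then (-1 : ℂ) ^ p * (p.choose (b - q) : ℂ) else 0 := by
  have hdrop : ∀ s ∈ Finset.range (S + 1),
      (if p ≤ s ∧ b ≤ s
        then (-1 : ℂ) ^ (s + q) * (q.choose (s - p) : ℂ) * (s.choose b : ℂ) else 0)
      = (if p ≤ s
        then (-1 : ℂ) ^ (s + q) * (q.choose (s - p) : ℂ) * (s.choose b : ℂ) else 0) := by
    intro s _
    by_cases h1 : p ≤ s
    · by_cases h2 : b ≤ s
      · rw [if_pos ⟨h1, h2⟩, if_pos h1]
      · rw [if_neg (by tauto), if_pos h1, Nat.choose_eq_zero_of_lt (show s < b by omega)]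
        simp
    · rw [if_neg (by tauto), if_neg h1]
  rw [Finset.sum_congr rfl hdrop, Finset.range_eq_Ico,
    ← Finset.sum_Ico_consecutive _ (Nat.zero_le p) (by omega : p ≤ S + 1)]
  have hz : ∑ s ∈ Finset.Ico 0 p,
      (if p ≤ s
        then (-1 : ℂ) ^ (s + q) * (q.choose (s - p) : ℂ) * (s.choose b : ℂ) else 0) = 0 := by
    apply Finset.sum_eq_zero
    intro s hs
    rw [Finset.mem_Ico] at hs
    rw [if_neg (by omega)]
  rw [hz, zero_add]
  have hpos : ∀ s ∈ Finset.Ico p (S + 1),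
      (if p ≤ s
        then (-1 : ℂ) ^ (s + q) * (q.choose (s - p) : ℂ) * (s.choose b : ℂ) else 0)
      = (-1 : ℂ) ^ (s + q) * (q.choose (s - p) : ℂ) * (s.choose b : ℂ) := by
    intro s hs
    rw [Finset.mem_Ico] at hs
    rw [if_pos hs.1]
  rw [Finset.sum_congr rfl hpos, Finset.sum_Ico_eq_sum_range]
  have hresum : ∀ r ∈ Finset.range (S + 1 - p),
      (-1 : ℂ) ^ ((p + r) + q) * (q.choose ((p + r) - p) : ℂ) * ((p + r).choose b : ℂ)
      = (-1 : ℂ) ^ (p + q) * ((-1 : ℂ) ^ r * (q.choose r : ℂ) * ((p + r).choose b : ℂ)) := by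
    intro r _
    rw [Nat.add_sub_cancel_left, show (p + r) + q = (p + q) + r by ring, pow_add]
    ring
  rw [Finset.sum_congr rfl hresum, ← Finset.mul_sum]
  have htrim : ∑ r ∈ Finset.range (S + 1 - p),
      (-1 : ℂ) ^ r * (q.choose r : ℂ) * ((p + r).choose b : ℂ)
      = ∑ r ∈ Finset.range (q + 1),
          (-1 : ℂ) ^ r * (q.choose r : ℂ) * ((p + r).choose b : ℂ) := by
    symm
    apply Finset.sum_subset
    · intro r hr
      rw [Finset.mem_range] at hr ⊢
      omega
    · intro r _ hr
      rw [Finset.mem_range] at hr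
      rw [Nat.choose_eq_zero_of_lt (by omega)]
      ring
  rw [htrim, binom_alt q p b]
  by_cases hqb : q ≤ b
  · rw [if_pos hqb, if_pos hqb, ← mul_assoc, ← pow_add,
      show p + q + q = p + 2 * q by ring, pow_add, pow_mul, neg_one_sq, one_pow, mul_one]
  · rw [if_neg hqb, if_neg hqb, mul_zero]

-- ## Helmholtz identity
lemma co_sum_mul {ι : Type*} (s : Finset ι) (F : ι → DP N) (w : DP N) (m : Mon N) :
    co ((∑ i ∈ s, F i) * w) m = ∑ i ∈ s, co (F i * w) m := by
  rw [Finset.sum_mul, co_sum]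

lemma co_smul_mul (c : ℂ) (F w : DP N) (m : Mon N) :
    co ((c • F) * w) m = c * co (F * w) m := by
  rw [smul_mul_assoc, co_smul]

lemma sum3_rot {n : ℕ} (F : ℕ → ℕ → ℕ → ℂ) :
    ∑ q ∈ Finset.range n, ∑ p ∈ Finset.range n, ∑ b ∈ Finset.range n, F q p b
      = ∑ b ∈ Finset.range n, ∑ p ∈ Finset.range n, ∑ q ∈ Finset.range n, F q p b :=
  calc ∑ q ∈ Finset.range n, ∑ p ∈ Finset.range n, ∑ b ∈ Finset.range n, F q p b
      = ∑ q ∈ Finset.range n, ∑ b ∈ Finset.range n, ∑ p ∈ Finset.range n, F q p b :=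
        Finset.sum_congr rfl fun q _ => Finset.sum_comm
    _ = ∑ b ∈ Finset.range n, ∑ q ∈ Finset.range n, ∑ p ∈ Finset.range n, F q p b :=
        Finset.sum_comm
    _ = ∑ b ∈ Finset.range n, ∑ p ∈ Finset.range n, ∑ q ∈ Finset.range n, F q p b :=
        Finset.sum_congr rfl fun b _ => Finset.sum_comm

/-- canonical trilinear form appearing on both sides of the Helmholtz identity -/
noncomputable def CAN (ρ μ : Fin N) (f w : DP N) (m : Mon N) (T : ℕ) : ℂ :=
  ∑ q ∈ Finset.range (T + 1), ∑ p ∈ Finset.range (T + 1), ∑ b ∈ Finset.range (T + 1),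
    (if q ≤ b then (-1 : ℂ) ^ p * ((p.choose (b - q) : ℕ) : ℂ) else 0)
      * co (dx^[(p + q) - b] (pd (Sum.inl (ρ, p)) (pd (Sum.inl (μ, q)) f)) * dx^[b] w) m

lemma helmB (ρ μ : Fin N) (f w : DP N) (m : Mon N) :
    ∑ t ∈ Finset.range (J m + 1), co (pd (Sum.inl (μ, t)) (vd ρ f) * dx^[t] w) m
      = CAN ρ μ f w m (3 * J m + 1) := by
  set D := J m with hD
  set T := 3 * D + 1 with hT
  -- truncation
  have htrunc : ∀ t ∈ Finset.range (D + 1),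
      co (pd (Sum.inl (μ, t)) (vd ρ f) * dx^[t] w) m
        = co (pd (Sum.inl (μ, t)) (vdT ρ T f) * dx^[t] w) m := by
    intro t ht
    rw [Finset.mem_range] at ht
    have h1 : Ag T (vd ρ f) (vdT ρ T f) := Ag_vdT (le_refl T) ρ f
    have h2 : Ag D (pd (Sum.inl (μ, t)) (vd ρ f)) (pd (Sum.inl (μ, t)) (vdT ρ T f)) :=
      Ag_pdn _ h1 (by show D + t ≤ T; omega)
    exact Ag_mul_left (dx^[t] w) h2 m (le_refl D)
  rw [Finset.sum_congr rfl htrunc]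
  -- expansion
  have hexp : ∀ t ∈ Finset.range (D + 1),
      co (pd (Sum.inl (μ, t)) (vdT ρ T f) * dx^[t] w) m
        = ∑ i ∈ Finset.range (T + 1), ∑ k ∈ Finset.range (t + 1),
            (-1 : ℂ) ^ i * ((i.choose k : ℕ) : ℂ)
              * co (dx^[i - k] (pd (Sum.inl (ρ, i)) (pd (Sum.inl (μ, t - k)) f))
                  * dx^[t] w) m := by
    intro t _
    rw [vdT, pd_sum, co_sum_mul]
    apply Finset.sum_congr rfl
    intro i _
    rw [pd_smul, co_smul_mul, pd_dx_iter μ i t (pd (Sum.inl (ρ, i)) f), co_sum_mul,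
      Finset.mul_sum]
    apply Finset.sum_congr rfl
    intro k _
    rw [co_smul_mul, pd_pd]
    ring
  rw [Finset.sum_congr rfl hexp]
  -- reflect k into q := t - k
  have hrefl : ∀ t ∈ Finset.range (D + 1), ∀ i ∈ Finset.range (T + 1),
      ∑ k ∈ Finset.range (t + 1),
        (-1 : ℂ) ^ i * ((i.choose k : ℕ) : ℂ)
          * co (dx^[i - k] (pd (Sum.inl (ρ, i)) (pd (Sum.inl (μ, t - k)) f)) * dx^[t] w) m
      = ∑ q ∈ Finset.range (T + 1),
          (if q ≤ t then (-1 : ℂ) ^ i * ((i.choose (t - q) : ℕ) : ℂ) else 0)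
            * co (dx^[(i + q) - t] (pd (Sum.inl (ρ, i)) (pd (Sum.inl (μ, q)) f))
                * dx^[t] w) m := by
    intro t ht i _
    rw [Finset.mem_range] at ht
    rw [← Finset.sum_range_reflect]
    symm
    rw [show T + 1 = (t + 1) + (T - t) by omega, Finset.sum_range_add]
    have hz : ∀ k ∈ Finset.range (T - t),
        (if (t + 1) + k ≤ t then (-1 : ℂ) ^ i * ((i.choose (t - ((t + 1) + k)) : ℕ) : ℂ) else 0)
          * co (dx^[(i + ((t + 1) + k)) - t]
              (pd (Sum.inl (ρ, i)) (pd (Sum.inl (μ, (t + 1) + k)) f)) * dx^[t] w) m = 0 := by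
      intro k _
      rw [if_neg (by omega), zero_mul]
    rw [Finset.sum_congr rfl hz, Finset.sum_const_zero, add_zero]
    apply Finset.sum_congr rfl
    intro q hq
    rw [Finset.mem_range] at hq
    rw [if_pos (by omega)]
    have e1 : t + 1 - 1 - q = t - q := by omega
    have e2 : i - (t - q) = (i + q) - t := by omega
    rw [e1, e2, show t - (t - q) = q by omega]
  rw [Finset.sum_congr rfl fun t ht => Finset.sum_congr rfl fun i hi => hrefl t ht i hi]
  -- extend the t-range from D+1 to T+1
  rw [show (∑ t ∈ Finset.range (D + 1), ∑ i ∈ Finset.range (T + 1),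
      ∑ q ∈ Finset.range (T + 1),
        (if q ≤ t then (-1 : ℂ) ^ i * ((i.choose (t - q) : ℕ) : ℂ) else 0)
          * co (dx^[(i + q) - t] (pd (Sum.inl (ρ, i)) (pd (Sum.inl (μ, q)) f))
              * dx^[t] w) m)
      = ∑ t ∈ Finset.range (T + 1), ∑ i ∈ Finset.range (T + 1),
          ∑ q ∈ Finset.range (T + 1),
            (if q ≤ t then (-1 : ℂ) ^ i * ((i.choose (t - q) : ℕ) : ℂ) else 0)
              * co (dx^[(i + q) - t] (pd (Sum.inl (ρ, i)) (pd (Sum.inl (μ, q)) f))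
                  * dx^[t] w) m from by
    apply Finset.sum_subset
    · intro t ht
      rw [Finset.mem_range] at ht ⊢
      omega
    · intro t _ ht
      rw [Finset.mem_range] at ht
      apply Finset.sum_eq_zero
      intro i _
      apply Finset.sum_eq_zero
      intro q _
      rw [co_mul_dx_iter_eq_zero _ _ _ _ (by omega), mul_zero]]
  exact (sum3_rot (n := T + 1) fun q p b =>
    (if q ≤ b then (-1 : ℂ) ^ p * ((p.choose (b - q) : ℕ) : ℂ) else 0)
      * co (dx^[(p + q) - b] (pd (Sum.inl (ρ, p)) (pd (Sum.inl (μ, q)) f)) * dx^[b] w) m).symm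

lemma sum_reflect_pad (T s : ℕ) (hsT : s ≤ T) (G : ℕ → ℂ) :
    ∑ k ∈ Finset.range (s + 1), G k
      = ∑ p ∈ Finset.range (T + 1), (if p ≤ s then G (s - p) else 0) := by
  symm
  conv_lhs => rw [show T + 1 = (s + 1) + (T - s) by omega, Finset.sum_range_add]
  have hz : ∀ k ∈ Finset.range (T - s),
      (if (s + 1) + k ≤ s then G (s - ((s + 1) + k)) else 0) = 0 := by
    intro k _
    rw [if_neg (by omega)]
  rw [Finset.sum_congr rfl hz, Finset.sum_const_zero, add_zero]
  have hpos : ∀ x ∈ Finset.range (s + 1),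
      (if x ≤ s then G (s - x) else 0) = G (s - x) := by
    intro x hx
    rw [Finset.mem_range] at hx
    rw [if_pos (by omega)]
  rw [Finset.sum_congr rfl hpos, ← Finset.sum_range_reflect G (s + 1)]
  apply Finset.sum_congr rfl
  intro x _
  rw [show s + 1 - 1 - x = s - x by omega]

lemma stepA (ρ μ : Fin N) (T s : ℕ) (f w : DP N) (m : Mon N) (v : DVar N) :
    co (dx^[s] (pd v (vdT μ T f) * w)) m
      = ∑ i ∈ Finset.range (T + 1),
          (-1 : ℂ) ^ i * co (dx^[s] (pd v (dx^[i] (pd (Sum.inl (μ, i)) f)) * w)) m := by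
  rw [vdT, pd_sum, Finset.sum_mul, dx_iter_sum, co_sum]
  apply Finset.sum_congr rfl
  intro i _
  rw [pd_smul, smul_mul_assoc, dx_iter_smul, co_smul]

lemma stepB (ρ : Fin N) (s i : ℕ) (h w : DP N) (m : Mon N) :
    co (dx^[s] (pd (Sum.inl (ρ, s)) (dx^[i] h) * w)) m
      = ∑ k ∈ Finset.range (s + 1),
          ((i.choose k : ℕ) : ℂ)
            * co (dx^[s] (dx^[i - k] (pd (Sum.inl (ρ, s - k)) h) * w)) m := by
  rw [pd_dx_iter, Finset.sum_mul, dx_iter_sum, co_sum]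
  apply Finset.sum_congr rfl
  intro k _
  rw [smul_mul_assoc, dx_iter_smul, co_smul]

lemma stepC (a w : DP N) (s n : ℕ) (m : Mon N) :
    co (dx^[s] (dx^[n] a * w)) m
      = ∑ j ∈ Finset.range (s + 1),
          ((s.choose j : ℕ) : ℂ) * co (dx^[j + n] a * dx^[s - j] w) m := by
  rw [dx_iter_mul, co_sum]
  apply Finset.sum_congr rfl
  intro j _
  rw [co_smul, ← Function.iterate_add_apply dx j n]

lemma sum4_rot {n n' : ℕ} (F : ℕ → ℕ → ℕ → ℕ → ℂ) :
    ∑ s ∈ Finset.range n', ∑ i ∈ Finset.range n, ∑ p ∈ Finset.range n,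
        ∑ b ∈ Finset.range n, F s i p b
      = ∑ i ∈ Finset.range n, ∑ p ∈ Finset.range n, ∑ b ∈ Finset.range n,
          ∑ s ∈ Finset.range n', F s i p b :=
  calc ∑ s ∈ Finset.range n', ∑ i ∈ Finset.range n, ∑ p ∈ Finset.range n,
        ∑ b ∈ Finset.range n, F s i p b
      = ∑ i ∈ Finset.range n, ∑ s ∈ Finset.range n', ∑ p ∈ Finset.range n,
          ∑ b ∈ Finset.range n, F s i p b := Finset.sum_comm
    _ = ∑ i ∈ Finset.range n, ∑ p ∈ Finset.range n, ∑ s ∈ Finset.range n',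
          ∑ b ∈ Finset.range n, F s i p b :=
        Finset.sum_congr rfl fun i _ => Finset.sum_comm
    _ = ∑ i ∈ Finset.range n, ∑ p ∈ Finset.range n, ∑ b ∈ Finset.range n,
          ∑ s ∈ Finset.range n', F s i p b :=
        Finset.sum_congr rfl fun i _ => Finset.sum_congr rfl fun p _ => Finset.sum_comm

lemma helmA (ρ μ : Fin N) (f w : DP N) (m : Mon N) :
    ∑ s ∈ Finset.range (J m + 1),
        (-1 : ℂ) ^ s * co (dx^[s] (pd (Sum.inl (ρ, s)) (vd μ f) * w)) m
      = CAN ρ μ f w m (3 * J m + 1) := by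
  set D := J m with hD
  set T := 3 * D + 1 with hT
  set S := 2 * D with hS
  -- extend the outer range to S+1
  rw [show (∑ s ∈ Finset.range (D + 1),
      (-1 : ℂ) ^ s * co (dx^[s] (pd (Sum.inl (ρ, s)) (vd μ f) * w)) m)
      = ∑ s ∈ Finset.range (S + 1),
          (-1 : ℂ) ^ s * co (dx^[s] (pd (Sum.inl (ρ, s)) (vd μ f) * w)) m from by
    apply Finset.sum_subset
    · intro x hx
      rw [Finset.mem_range] at hx ⊢
      omega
    · intro x _ hx
      rw [Finset.mem_range] at hx
      rw [co_dx_iter_eq_zero _ _ _ (by omega), mul_zero]]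
  -- truncation of vd
  have htrunc : ∀ s ∈ Finset.range (S + 1),
      co (dx^[s] (pd (Sum.inl (ρ, s)) (vd μ f) * w)) m
        = co (dx^[s] (pd (Sum.inl (ρ, s)) (vdT μ T f) * w)) m := by
    intro s hs
    rw [Finset.mem_range] at hs
    have h1 : Ag T (vd μ f) (vdT μ T f) := Ag_vdT (le_refl T) μ f
    have h2 : Ag D (pd (Sum.inl (ρ, s)) (vd μ f)) (pd (Sum.inl (ρ, s)) (vdT μ T f)) :=
      Ag_pdn _ h1 (by show D + s ≤ T; omega)
    exact Ag_dx_iter s (Ag_mul_left w h2) m (le_refl D)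
  rw [Finset.sum_congr rfl fun s hs =>
    congrArg (fun z => (-1 : ℂ) ^ s * z) (htrunc s hs)]
  -- expansion
  have hexp : ∀ s ∈ Finset.range (S + 1),
      (-1 : ℂ) ^ s * co (dx^[s] (pd (Sum.inl (ρ, s)) (vdT μ T f) * w)) m
        = ∑ i ∈ Finset.range (T + 1), ∑ k ∈ Finset.range (s + 1), ∑ j ∈ Finset.range (s + 1),
            (-1 : ℂ) ^ (s + i) * ((i.choose k : ℕ) : ℂ) * ((s.choose j : ℕ) : ℂ)
              * co (dx^[j + (i - k)] (pd (Sum.inl (ρ, s - k)) (pd (Sum.inl (μ, i)) f))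
                  * dx^[s - j] w) m := by
    intro s _
    rw [stepA ρ μ T s f w m, Finset.mul_sum]
    apply Finset.sum_congr rfl
    intro i _
    rw [stepB ρ s i (pd (Sum.inl (μ, i)) f) w m, Finset.mul_sum, Finset.mul_sum]
    apply Finset.sum_congr rfl
    intro k _
    rw [stepC, Finset.mul_sum, Finset.mul_sum, Finset.mul_sum]
    apply Finset.sum_congr rfl
    intro j _
    rw [pow_add]
    ring
  rw [Finset.sum_congr rfl hexp]
  -- reflect and pad the two inner sums
  have hrefl : ∀ s ∈ Finset.range (S + 1), ∀ i ∈ Finset.range (T + 1),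
      ∑ k ∈ Finset.range (s + 1), ∑ j ∈ Finset.range (s + 1),
        (-1 : ℂ) ^ (s + i) * ((i.choose k : ℕ) : ℂ) * ((s.choose j : ℕ) : ℂ)
          * co (dx^[j + (i - k)] (pd (Sum.inl (ρ, s - k)) (pd (Sum.inl (μ, i)) f))
              * dx^[s - j] w) m
      = ∑ p ∈ Finset.range (T + 1), ∑ b ∈ Finset.range (T + 1),
          (if p ≤ s ∧ b ≤ s
            then (-1 : ℂ) ^ (s + i) * ((i.choose (s - p) : ℕ) : ℂ) * ((s.choose b : ℕ) : ℂ)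
            else 0)
            * co (dx^[(p + i) - b] (pd (Sum.inl (ρ, p)) (pd (Sum.inl (μ, i)) f))
                * dx^[b] w) m := by
    intro s hs i _
    rw [Finset.mem_range] at hs
    rw [sum_reflect_pad T s (by omega)]
    apply Finset.sum_congr rfl
    intro p hp
    rw [Finset.mem_range] at hp
    by_cases hps : p ≤ s
    · rw [if_pos hps]
      rw [sum_reflect_pad T s (by omega)]
      apply Finset.sum_congr rfl
      intro b hb
      rw [Finset.mem_range] at hb
      by_cases hbs : b ≤ s
      · rw [if_pos hbs, if_pos ⟨hps, hbs⟩, show s - (s - p) = p by omega,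
          show s - (s - b) = b by omega, Nat.choose_symm hbs]
        by_cases hspi : s - p ≤ i
        · rw [show (s - b) + (i - (s - p)) = (p + i) - b by omega]
        · rw [Nat.choose_eq_zero_of_lt (show i < s - p by omega)]
          push_cast
          ring
      · rw [if_neg hbs, if_neg (by tauto)]
        rw [zero_mul]
    · rw [if_neg hps]
      symm
      apply Finset.sum_eq_zero
      intro b _
      rw [if_neg (by tauto), zero_mul]
  rw [Finset.sum_congr rfl fun s hs => Finset.sum_congr rfl fun i hi => hrefl s hs i hi]
  rw [sum4_rot]
  apply Finset.sum_congr rfl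
  intro i _
  apply Finset.sum_congr rfl
  intro p _
  apply Finset.sum_congr rfl
  intro b _
  rw [← Finset.sum_mul]
  by_cases hbig : p + i ≤ S
  · rw [binom_A i p b S hbig]
  · have hGG : co (dx^[(p + i) - b] (pd (Sum.inl (ρ, p)) (pd (Sum.inl (μ, i)) f))
        * dx^[b] w) m = 0 := by
      by_cases hb : b ≤ D
      · exact co_dx_iter_mul_eq_zero _ _ _ _ (by omega)
      · exact co_mul_dx_iter_eq_zero _ _ _ _ (by omega)
    rw [hGG, mul_zero, mul_zero]

lemma helmholtz (ρ μ : Fin N) (f w : DP N) (m : Mon N) :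
    ∑ s ∈ Finset.range (J m + 1),
        (-1 : ℂ) ^ s * co (dx^[s] (pd (Sum.inl (ρ, s)) (vd μ f) * w)) m
      = ∑ t ∈ Finset.range (J m + 1), co (pd (Sum.inl (μ, t)) (vd ρ f) * dx^[t] w) m :=
  (helmA ρ μ f w m).trans (helmB ρ μ f w m).symm

lemma key_exchange [NeZero N] (μ ν : Fin N) (Fq Gq : DP N) (m : Mon N) :
    co (vd 0 (vd μ Fq * dx (vd ν Gq))) m
      = (∑ t ∈ Finset.range (J m + 1),
          co (pd (Sum.inl (μ, t)) (vd 0 Fq) * dx^[t] (dx (vd ν Gq))) m)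
        - ∑ t ∈ Finset.range (J m + 1),
            co (pd (Sum.inl (ν, t)) (vd 0 Gq) * dx^[t] (dx (vd μ Fq))) m := by
  rw [co_vd_mul 0 (vd μ Fq) (dx (vd ν Gq)) m, step3 0 (vd μ Fq) (vd ν Gq) m,
    helmholtz 0 μ Fq (dx (vd ν Gq)) m, helmholtz 0 ν Gq (dx (vd μ Fq)) m]
  ring

lemma co_pbEta (η : Matrix (Fin N) (Fin N) ℂ) (c : DP N) (hb : LF N) (m : Mon N) :
    co (pbEta η c hb) m
      = ∑ γ : Fin N, ∑ n ∈ Finset.range (J m + 1),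
          co (pd (Sum.inl (γ, n)) c * dx^[n] (etaAp η γ fun ν => vdQ ν hb)) m := by
  rw [show co (pbEta η c hb) m = ∑ γ : Fin N, ∑ᶠ n : ℕ,
      co (pd (Sum.inl (γ, n)) c * dx^[n] (etaAp η γ fun ν => vdQ ν hb)) m from rfl]
  apply Finset.sum_congr rfl
  intro γ _
  apply finsum_co_eq_sum
  intro n hn
  exact co_mul_dx_iter_eq_zero _ _ _ _ (by omega)

lemma co_pbEta_expand (η : Matrix (Fin N) (Fin N) ℂ) (c : DP N) (hb : LF N) (m : Mon N) :
    co (pbEta η c hb) m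
      = ∑ γ : Fin N, ∑ ν : Fin N, η γ ν
          * ∑ n ∈ Finset.range (J m + 1),
              co (pd (Sum.inl (γ, n)) c * dx^[n] (dx (vd ν (rep hb)))) m := by
  rw [co_pbEta]
  apply Finset.sum_congr rfl
  intro γ _
  have hpush : ∀ n ∈ Finset.range (J m + 1),
      co (pd (Sum.inl (γ, n)) c * dx^[n] (etaAp η γ fun ν => vdQ ν hb)) m
        = ∑ ν : Fin N, η γ ν
            * co (pd (Sum.inl (γ, n)) c * dx^[n] (dx (vd ν (rep hb)))) m := by
    intro n _
    rw [etaAp, dx_iter_sum, Finset.mul_sum, co_sum]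
    apply Finset.sum_congr rfl
    intro ν _
    rw [dx_iter_smul, mul_smul_comm, co_smul, vdQ_def]
  rw [Finset.sum_congr rfl hpush, Finset.sum_comm]
  apply Finset.sum_congr rfl
  intro ν _
  rw [Finset.mul_sum]

-- ## the main tau-symmetry identity (density level)
lemma tausym_main [NeZero N] (η : Matrix (Fin N) (Fin N) ℂ) (hsym : η.IsSymm) (f g : LF N)
    (hcm : lfbEta η f g = 0) :
    pbEta η (vdQ 0 f) g = pbEta η (vdQ 0 g) f := by
  apply ext_co; intro m
  have hCmem : (∑ μ : Fin N, vdQ μ f * etaAp η μ fun ν => vdQ ν g) ∈ lfSub N := by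
    have h0 : intg (∑ μ : Fin N, vdQ μ f * etaAp η μ fun ν => vdQ ν g) = 0 := hcm
    rw [intg, Submodule.mkQ_apply, Submodule.Quotient.mk_eq_zero] at h0
    exact h0
  have hco : co (vd 0 (∑ μ : Fin N, vdQ μ f * etaAp η μ fun ν => vdQ ν g)) m = 0 := by
    rw [vd_mem_lfSub hCmem 0, co_zero]
  -- expand the bracket density
  have hden : ∀ μ : Fin N, (vdQ μ f * etaAp η μ fun ν => vdQ ν g)
      = ∑ ν : Fin N, η μ ν • (vd μ (rep f) * dx (vd ν (rep g))) := by
    intro μ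
    rw [etaAp, Finset.mul_sum]
    apply Finset.sum_congr rfl
    intro ν _
    rw [mul_smul_comm, vdQ_def, vdQ_def]
  have hexp : co (vd 0 (∑ μ : Fin N, vdQ μ f * etaAp η μ fun ν => vdQ ν g)) m
      = ∑ μ : Fin N, ∑ ν : Fin N, η μ ν
          * ((∑ t ∈ Finset.range (J m + 1),
              co (pd (Sum.inl (μ, t)) (vd 0 (rep f)) * dx^[t] (dx (vd ν (rep g)))) m)
            - ∑ t ∈ Finset.range (J m + 1),
                co (pd (Sum.inl (ν, t)) (vd 0 (rep g)) * dx^[t] (dx (vd μ (rep f)))) m) := by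
    rw [vd_sum, co_sum]
    apply Finset.sum_congr rfl
    intro μ _
    rw [hden μ, vd_sum, co_sum]
    apply Finset.sum_congr rfl
    intro ν _
    rw [vd_smul, co_smul, key_exchange]
  rw [hexp] at hco
  have hL : co (pbEta η (vdQ 0 f) g) m
      = ∑ μ : Fin N, ∑ ν : Fin N, η μ ν
          * ∑ t ∈ Finset.range (J m + 1),
              co (pd (Sum.inl (μ, t)) (vd 0 (rep f)) * dx^[t] (dx (vd ν (rep g)))) m := by
    rw [co_pbEta_expand]
    apply Finset.sum_congr rfl
    intro μ _
    apply Finset.sum_congr rfl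
    intro ν _
    rw [vdQ_def]
  have hR : co (pbEta η (vdQ 0 g) f) m
      = ∑ μ : Fin N, ∑ ν : Fin N, η μ ν
          * ∑ t ∈ Finset.range (J m + 1),
              co (pd (Sum.inl (μ, t)) (vd 0 (rep g)) * dx^[t] (dx (vd ν (rep f)))) m := by
    rw [co_pbEta_expand]
    apply Finset.sum_congr rfl
    intro μ _
    apply Finset.sum_congr rfl
    intro ν _
    rw [vdQ_def]
  have hswap : (∑ μ : Fin N, ∑ ν : Fin N, η μ ν
      * ∑ t ∈ Finset.range (J m + 1),
          co (pd (Sum.inl (ν, t)) (vd 0 (rep g)) * dx^[t] (dx (vd μ (rep f)))) m)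
      = ∑ μ : Fin N, ∑ ν : Fin N, η μ ν
          * ∑ t ∈ Finset.range (J m + 1),
              co (pd (Sum.inl (μ, t)) (vd 0 (rep g)) * dx^[t] (dx (vd ν (rep f)))) m := by
    rw [Finset.sum_comm]
    apply Finset.sum_congr rfl
    intro μ _
    apply Finset.sum_congr rfl
    intro ν _
    rw [hsym.apply μ ν]
  rw [hL, hR, ← hswap]
  have hsplit : ∀ μ : Fin N, ∀ ν : Fin N, η μ ν
      * ((∑ t ∈ Finset.range (J m + 1),
          co (pd (Sum.inl (μ, t)) (vd 0 (rep f)) * dx^[t] (dx (vd ν (rep g)))) m)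
        - ∑ t ∈ Finset.range (J m + 1),
            co (pd (Sum.inl (ν, t)) (vd 0 (rep g)) * dx^[t] (dx (vd μ (rep f)))) m)
      = η μ ν * (∑ t ∈ Finset.range (J m + 1),
          co (pd (Sum.inl (μ, t)) (vd 0 (rep f)) * dx^[t] (dx (vd ν (rep g)))) m)
        - η μ ν * ∑ t ∈ Finset.range (J m + 1),
            co (pd (Sum.inl (ν, t)) (vd 0 (rep g)) * dx^[t] (dx (vd μ (rep f)))) m := by
    intro μ ν; ring
  rw [Finset.sum_congr rfl fun μ _ => Finset.sum_congr rfl fun ν _ => hsplit μ ν] at hco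
  rw [Finset.sum_congr rfl fun μ (_ : μ ∈ Finset.univ) => Finset.sum_sub_distrib _ _] at hco
  rw [Finset.sum_sub_distrib, sub_eq_zero] at hco
  exact hco

end DP



open DP in
/-- Proposition: sufficient condition for a tau-structure.
`η` is a symmetric nondegenerate matrix, `K = η∂_x`; the `H β q` are the
pairwise commuting Hamiltonians `h̄_{β,q} ∈ Λ̂^{[0]}_N`, `h̄_{1,0}` generates
spatial translations, `∂h̄_{β,q}/∂u^1 = h̄_{β,q−1}` for `q ≥ 1` and
`∂h̄_{β,0}/∂u^1 = ∫ θ_{βμ} u^μ dx` for a nondegenerate matrix `θ`.  Then the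
densities `h_{β,q} := δh̄_{β,q+1}/δu^1` (here `h β q` stands for `h_{β,q−1}`)
define a tau-structure: the `∫ h_{β,−1} dx = ∫ θ_{βμ}u^μ dx` are `N` linearly
independent Casimirs, `∫ h_{β,q} dx = h̄_{β,q}` for `q ≥ 0`, and the
tau-symmetry `{h_{α,p−1}, h̄_{β,q}} = {h_{β,q−1}, h̄_{α,p}}` holds. -/
theorem statement0 (N : ℕ) [NeZero N] (η : Matrix (Fin N) (Fin N) ℂ)
    (hsym : η.IsSymm) (hnd : IsUnit η.det)
    (H : Fin N → ℕ → LF N)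
    (hmem : ∀ β q, H β q ∈ LFHomog N 0)
    (hcomm : ∀ β q γ p, lfbEta η (H β q) (H γ p) = 0)
    (htransl : ∀ α : Fin N, etaAp η α (fun μ => vdQ μ (H 0 0)) = uv α 1)
    (θ : Matrix (Fin N) (Fin N) ℂ) (hθ : IsUnit θ.det)
    (hd1 : ∀ β q, pdQ (Sum.inl (0, 0)) (H β (q + 1)) = H β q)
    (hd0 : ∀ β, pdQ (Sum.inl (0, 0)) (H β 0) = intg (∑ μ : Fin N, θ β μ • uv μ 0))
    (h : Fin N → ℕ → DP N) (hdef : ∀ β q, h β q = vdQ 0 (H β q)) :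
    (∀ β, intg (h β 0) = intg (∑ μ : Fin N, θ β μ • uv μ 0)) ∧
    (∀ β α, etaAp η α (fun μ => vdQ μ (intg (h β 0))) = 0) ∧
    (LinearIndependent ℂ fun β : Fin N => intg (h β 0)) ∧
    (∀ β q, intg (h β (q + 1)) = H β q) ∧
    (∀ α β p q, pbEta η (h α p) (H β q) = pbEta η (h β q) (H α p)) := by
  have p1 : ∀ β, intg (h β 0) = intg (∑ μ : Fin N, θ β μ • uv μ 0) := by
    intro β
    rw [hdef]
    rw [vdQ_def, intg_vd]
    exact hd0 β
  refine ⟨p1, ?_, ?_, ?_, ?_⟩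
  · -- Casimirs
    intro β α
    have hv : ∀ ν : Fin N, vdQ ν (intg (h β 0)) = θ β ν • 1 := by
      intro ν
      rw [p1 β, vdQ_intg, vd_sum]
      have : ∀ μ : Fin N, vd ν (θ β μ • uv μ 0) = θ β μ • (if ν = μ then 1 else 0) := by
        intro μ; rw [vd_smul, vd_uv0]
      rw [Finset.sum_congr rfl (fun μ _ => this μ)]
      rw [Finset.sum_eq_single ν]
      · rw [if_pos rfl]
      · intro μ _ hμ; rw [if_neg (fun hh => hμ hh.symm), smul_zero]
      · intro hmem; exact absurd (Finset.mem_univ ν) hmem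
    rw [etaAp]
    apply Finset.sum_eq_zero
    intro ν _
    rw [hv ν, dx_smul, dx_one, smul_zero, smul_zero]
  · -- linear independence
    rw [Fintype.linearIndependent_iff]
    intro c hc
    have hW : (∑ β : Fin N, c β • ∑ μ : Fin N, θ β μ • uv μ 0) ∈ lfSub N := by
      have : intg (∑ β : Fin N, c β • ∑ μ : Fin N, θ β μ • uv μ 0) = 0 := by
        rw [map_sum]
        have : ∀ β : Fin N, intg (c β • ∑ μ : Fin N, θ β μ • uv μ 0)
            = c β • intg (h β 0) := by
          intro β; rw [map_smul, p1 β]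
        rw [Finset.sum_congr rfl (fun β _ => this β)]
        exact hc
      rw [intg, Submodule.mkQ_apply, Submodule.Quotient.mk_eq_zero] at this
      exact this
    have hcoW := lfSub_le_Smod hW
    have hvec : ∀ ν : Fin N, ∑ β : Fin N, c β * θ β ν = 0 := by
      intro ν
      have := hcoW ν
      rw [co_sum] at this
      rw [← this]
      apply Finset.sum_congr rfl
      intro β _
      rw [co_smul, co_sum]
      congr 1
      have : ∀ μ : Fin N, co (θ β μ • uv μ 0) (Finsupp.single (Sum.inl (ν, 0)) 1)
          = θ β μ * (if ν = μ then 1 else 0) := by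
        intro μ; rw [co_smul, co_uv0_single]
      rw [Finset.sum_congr rfl (fun μ _ => this μ), Finset.sum_eq_single ν]
      · rw [if_pos rfl, mul_one]
      · intro μ _ hμ; rw [if_neg (fun hh => hμ hh.symm), mul_zero]
      · intro hmem; exact absurd (Finset.mem_univ ν) hmem
    have hvm : Matrix.vecMul c θ = 0 := by
      funext ν
      rw [show Matrix.vecMul c θ ν = ∑ β : Fin N, c β * θ β ν by
        simp [Matrix.vecMul, dotProduct]]
      exact hvec ν
    intro β
    have : c = 0 := by
      have h1 : Matrix.vecMul (Matrix.vecMul c θ) θ⁻¹ = c := by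
        rw [Matrix.vecMul_vecMul, Matrix.mul_nonsing_inv θ hθ, Matrix.vecMul_one]
      rw [hvm, Matrix.zero_vecMul] at h1
      exact h1.symm
    exact congrFun this β
  · -- densities
    intro β q
    rw [hdef]
    rw [vdQ_def, intg_vd]
    exact hd1 β q
  · -- tau-symmetry
    intro α β p q
    rw [hdef α p, hdef β q]
    exact tausym_main η hsym (H α p) (H β q) (hcomm α p β q)
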